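/- arXiv:2203.05298 — 4 statements merged into one kernel-verified Lean document; each statement's English description precedes it below -/
import Mathlib

section
/- If a signed digraph G has an initial cycle, then no Boolean network on G is synchronizing. -/
/-- A signed digraph on vertex set `V`, given by its positive and negative arc relations. -/
structure SignedDigraph (V : Type*) where
  pos : V → V → Prop
  neg : V → V → Prop

/-- The last vertex of a walk starting at `u` with the given steps. -/
def walkEnd {V : Type*} (u : V) (steps : List (V × Bool)) : V :=
  (steps.map Prod.fst).getLastD u

/-- The sign of a walk (`true` = positive): positive iff the number of
negative (`false`) arcs is even. -/
def walkSign {V : Type*} (steps : List (V × Bool)) : Bool :=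
  steps.foldl (fun acc step => acc == step.2) true

namespace SignedDigraph

variable {V : Type*}

/-- Arc of the underlying digraph. -/
def Arc (G : SignedDigraph V) (j i : V) : Prop := G.pos j i ∨ G.neg j i

/-- `G.IsWalk u steps`: `steps` is a list of (next vertex, sign of arc) pairs
describing a walk in `G` starting at `u`. -/
def IsWalk (G : SignedDigraph V) : V → List (V × Bool) → Prop
  | _, [] => True
  | u, step :: rest =>
      (if step.2 then G.pos u step.1 else G.neg u step.1) ∧ G.IsWalk step.1 rest

/-- A (simple) path from `u`: a walk with pairwise distinct vertices. -/
def IsPath (G : SignedDigraph V) (u : V) (steps : List (V × Bool)) : Prop :=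
  G.IsWalk u steps ∧ (u :: steps.map Prod.fst).Nodup

/-- A (simple) path from `u` to `v`. -/
def IsPathFrom (G : SignedDigraph V) (u : V) (steps : List (V × Bool)) (v : V) : Prop :=
  G.IsPath u steps ∧ walkEnd u steps = v

/-- A cycle through `u`: a nonempty closed walk from `u` back to `u` with no repeated
vertex except the endpoint. -/
def IsCycle (G : SignedDigraph V) (u : V) (steps : List (V × Bool)) : Prop :=
  steps ≠ [] ∧ G.IsWalk u steps ∧ walkEnd u steps = u ∧
    (u :: (steps.map Prod.fst).dropLast).Nodup

/-- `G` has no positive cycle. -/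
def NoPositiveCycle (G : SignedDigraph V) : Prop :=
  ∀ u steps, G.IsCycle u steps → walkSign steps = false

/-- `G` has no negative cycle. -/
def NoNegativeCycle (G : SignedDigraph V) : Prop :=
  ∀ u steps, G.IsCycle u steps → walkSign steps = true

/-- Reachability in the underlying digraph. -/
def Reach (G : SignedDigraph V) (u v : V) : Prop :=
  ∃ steps, G.IsWalk u steps ∧ walkEnd u steps = v

/-- The underlying digraph of `G` is strongly connected. -/
def StronglyConnected (G : SignedDigraph V) : Prop := ∀ u v, G.Reach u v

/-- `u` and `v` lie in the same strong component. -/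
def SameComp (G : SignedDigraph V) (u v : V) : Prop := G.Reach u v ∧ G.Reach v u

/-- The strong component of `u`. -/
def comp (G : SignedDigraph V) (u : V) : Set V := {v | G.SameComp u v}

/-- The in-degree of `i`: the number of arcs (with their signs) entering `i`. -/
noncomputable def inDegree (G : SignedDigraph V) (i : V) : ℕ :=
  {j | G.pos j i}.ncard + {j | G.neg j i}.ncard

/-- A source: a vertex with no in-coming arc. -/
def IsSource (G : SignedDigraph V) (i : V) : Prop := ∀ j, ¬ G.Arc j i

/-- `G` has no sources. -/
def NoSource (G : SignedDigraph V) : Prop := ∀ i, ¬ G.IsSource i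

/-- The subgraph induced on a set `S` of vertices. -/
def induce (G : SignedDigraph V) (S : Set V) : SignedDigraph V where
  pos j i := j ∈ S ∧ i ∈ S ∧ G.pos j i
  neg j i := j ∈ S ∧ i ∈ S ∧ G.neg j i

/-- The underlying digraph of `G` restricted to `S` is a cycle: `S` is nonempty,
every vertex of `S` has exactly one in-coming arc inside `S`, and `S` is strongly
connected inside `S`. -/
def IsCycleGraphOn (G : SignedDigraph V) (S : Set V) : Prop :=
  S.Nonempty ∧ (∀ i ∈ S, (G.induce S).inDegree i = 1) ∧
    ∀ u ∈ S, ∀ v ∈ S, (G.induce S).Reach u v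

/-- The underlying digraph of `G` is a cycle. -/
def IsCycleGraph (G : SignedDigraph V) : Prop := G.IsCycleGraphOn Set.univ

/-- `S` is an initial strong component of `G`. -/
def IsInitialComponent (G : SignedDigraph V) (S : Set V) : Prop :=
  (∃ u, S = G.comp u) ∧ ∀ j i, i ∈ S → G.Arc j i → j ∈ S

/-- `G` has an initial cycle: an initial strong component whose underlying digraph
is a cycle. -/
def HasInitialCycle (G : SignedDigraph V) : Prop :=
  ∃ S : Set V, G.IsInitialComponent S ∧ G.IsCycleGraphOn S

/-- A forward path: a nonempty path whose last arc joins two distinct strong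
components. -/
def IsForwardPath (G : SignedDigraph V) (u : V) (steps : List (V × Bool)) (v : V) : Prop :=
  G.IsPathFrom u steps v ∧ steps ≠ [] ∧ ¬ G.SameComp (walkEnd u steps.dropLast) v

/-- `G` is `i`-homogenous: every strong component contains a vertex `j` such that
all forward paths from `j` to `i` have the same sign. -/
def IsHomogenousAt (G : SignedDigraph V) (i : V) : Prop :=
  ∀ u : V, ∃ j, G.SameComp u j ∧
    ∀ steps₁ steps₂, G.IsForwardPath j steps₁ i → G.IsForwardPath j steps₂ i →
      walkSign steps₁ = walkSign steps₂

/-- `G` is homogenous. -/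
def IsHomogenous (G : SignedDigraph V) : Prop := ∀ i, G.IsHomogenousAt i

/-- `G` is simple: no pair of parallel arcs of opposite signs. -/
def IsSimple (G : SignedDigraph V) : Prop := ∀ j i, ¬ (G.pos j i ∧ G.neg j i)

end SignedDigraph

section BooleanNetwork

variable {V : Type*} [DecidableEq V]

/-- Asynchronous update of component `i` of the Boolean network `f`. -/
def localUpdate (f : (V → Bool) → V → Bool) (i : V) (x : V → Bool) : V → Bool :=
  Function.update x i (f x i)

/-- `f^w` : for `w = i₁,…,i_ℓ`, `wordUpdate f w = f^{i_ℓ} ∘ ⋯ ∘ f^{i₁}`. -/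
def wordUpdate (f : (V → Bool) → V → Bool) (w : List V) (x : V → Bool) : V → Bool :=
  w.foldl (fun y i => localUpdate f i y) x

/-- `w` is a synchronizing word for `f`: `f^w` is constant. -/
def SyncWord (f : (V → Bool) → V → Bool) (w : List V) : Prop :=
  ∃ c : V → Bool, ∀ x, wordUpdate f w x = c

/-- `f` is synchronizing. -/
def Synchronizing (f : (V → Bool) → V → Bool) : Prop := ∃ w, SyncWord f w

/-- Positive arc of the signed interaction digraph of `f`. -/
def posIArc (f : (V → Bool) → V → Bool) (j i : V) : Prop :=
  ∃ x : V → Bool, x j = false ∧ f x i = false ∧ f (Function.update x j true) i = true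

/-- Negative arc of the signed interaction digraph of `f`. -/
def negIArc (f : (V → Bool) → V → Bool) (j i : V) : Prop :=
  ∃ x : V → Bool, x j = false ∧ f x i = true ∧ f (Function.update x j true) i = false

/-- `f` is a Boolean network on `G`: the signed interaction digraph of `f` is `G`. -/
def IsBNOn (f : (V → Bool) → V → Bool) (G : SignedDigraph V) : Prop :=
  (∀ j i, G.pos j i ↔ posIArc f j i) ∧ (∀ j i, G.neg j i ↔ negIArc f j i)

/-- Component `i` of `f` is a conjunction with respect to `G`. -/
def IsConjunction (G : SignedDigraph V) (f : (V → Bool) → V → Bool) (i : V) : Prop :=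
  ∀ x : V → Bool, (f x i = true ↔
    (∀ j, G.pos j i → x j = true) ∧ (∀ j, G.neg j i → x j = false))

/-- Component `i` of `f` is a disjunction with respect to `G`. -/
def IsDisjunction (G : SignedDigraph V) (f : (V → Bool) → V → Bool) (i : V) : Prop :=
  ∀ x : V → Bool, (f x i = false ↔
    (∀ j, G.pos j i → x j = false) ∧ (∀ j, G.neg j i → x j = true))

/-- `f` is an and-or-net on `G`. -/
def IsAndOrNet (G : SignedDigraph V) (f : (V → Bool) → V → Bool) : Prop :=
  IsBNOn f G ∧ ∀ i, IsConjunction G f i ∨ IsDisjunction G f i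

/-- `f` is the and-net on `G`. -/
def IsAndNet (G : SignedDigraph V) (f : (V → Bool) → V → Bool) : Prop :=
  IsBNOn f G ∧ ∀ i, IsConjunction G f i

/-- `w` is a canalizing word from `(i, a)` with image `b`. -/
def Canalizing (f : (V → Bool) → V → Bool) (i : V) (a : Bool) (w : List V)
    (b : V → Bool) : Prop :=
  i ∉ w ∧ w.Nodup ∧ ∀ x : V → Bool, x i = a → ∀ j ∈ w, wordUpdate f w x j = b j

end BooleanNetwork

section AuxLemmas

variable {V : Type} [Fintype V] [DecidableEq V]

/-- If there is no arc from `j` to `i`, flipping coordinate `j` does not change `f · i`. -/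
lemma noArc_flip (f : (V → Bool) → V → Bool) (G : SignedDigraph V) (hBN : IsBNOn f G)
    {j i : V} (h : ¬ G.Arc j i) (x : V → Bool) (b : Bool) :
    f (Function.update x j b) i = f x i := by
  have key : ∀ z : V → Bool, z j = false → f (Function.update z j true) i = f z i := by
    intro z hz
    by_contra hne
    cases hfz : f z i with
    | false =>
      have h1 : f (Function.update z j true) i = true := by
        cases hfu : f (Function.update z j true) i with
        | false => exact absurd (hfu.trans hfz.symm) hne
        | true => rfl
      exact h (Or.inl ((hBN.1 j i).mpr ⟨z, hz, hfz, h1⟩))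
    | true =>
      have h1 : f (Function.update z j true) i = false := by
        cases hfu : f (Function.update z j true) i with
        | false => rfl
        | true => exact absurd (hfu.trans hfz.symm) hne
      exact h (Or.inr ((hBN.2 j i).mpr ⟨z, hz, hfz, h1⟩))
  rcases eq_or_ne b (x j) with rfl | hbx
  · rw [Function.update_eq_self]
  · cases hxj : x j with
    | false =>
      have hb : b = true := by
        cases b with
        | false => exact absurd hxj.symm hbx
        | true => rfl
      rw [hb]
      exact key x hxj
    | true =>
      have hb : b = false := by
        cases b with
        | false => rfl
        | true => exact absurd hxj.symm hbx
      subst hb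
      have hz : (Function.update x j false) j = false := Function.update_self j false x
      have := key (Function.update x j false) hz
      have hupd : Function.update (Function.update x j false) j true = x := by
        rw [Function.update_idem, ← hxj, Function.update_eq_self]
      rw [hupd] at this
      exact this.symm

/-- If all arcs into `i` come from `j₀`, then `f · i` depends only on coordinate `j₀`. -/
lemma indep_of_unique (f : (V → Bool) → V → Bool) (G : SignedDigraph V) (hBN : IsBNOn f G)
    {i j₀ : V} (h : ∀ j, j ≠ j₀ → ¬ G.Arc j i) :
    ∀ x y : V → Bool, x j₀ = y j₀ → f x i = f y i := by
  suffices H : ∀ (s : Finset V) (x y : V → Bool), x j₀ = y j₀ →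
      (∀ j, x j ≠ y j → j ∈ s) → f x i = f y i by
    intro x y hxy; exact H Finset.univ x y hxy (fun j _ => Finset.mem_univ j)
  intro s
  induction s using Finset.induction_on with
  | empty =>
    intro x y h0 hd
    have : x = y := funext fun j => by
      by_contra hc; exact absurd (hd j hc) (Finset.notMem_empty j)
    rw [this]
  | @insert a s ha ih =>
    intro x y h0 hd
    rcases eq_or_ne (x a) (y a) with hxa | hxa
    · refine ih x y h0 (fun j hj => ?_)
      rcases Finset.mem_insert.mp (hd j hj) with rfl | hm
      · exact absurd hxa hj
      · exact hm
    · have haj : a ≠ j₀ := fun he => hxa (by rw [he]; rw [h0])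
      have step : f (Function.update y a (x a)) i = f y i :=
        noArc_flip f G hBN (h a haj) y (x a)
      have h1 : f x i = f (Function.update y a (x a)) i := by
        apply ih
        · rw [Function.update_of_ne (Ne.symm haj)]
          exact h0
        · intro j hj
          rcases eq_or_ne j a with rfl | hja
          · rw [Function.update_self] at hj
            exact absurd rfl hj
          · rw [Function.update_of_ne hja] at hj
            rcases Finset.mem_insert.mp (hd j hj) with rfl | hm
            · exact absurd rfl hja
            · exact hm
      rw [h1, step]

/-- If the unique arc into `i` comes from `j₀`, flipping coordinate `j₀` flips `f · i`. -/
lemma flip_key (f : (V → Bool) → V → Bool) (G : SignedDigraph V) (hBN : IsBNOn f G)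
    {i j₀ : V} (harc : G.Arc j₀ i) (hothers : ∀ j, j ≠ j₀ → ¬ G.Arc j i) :
    ∀ x y : V → Bool, y j₀ = ! (x j₀) → f y i = ! (f x i) := by
  have hind := indep_of_unique f G hBN hothers
  obtain ⟨x0, hx0, hflip⟩ : ∃ x0 : V → Bool, x0 j₀ = false ∧
      f (Function.update x0 j₀ true) i = ! f x0 i := by
    rcases harc with hp | hn
    · obtain ⟨x0, h1, h2, h3⟩ := (hBN.1 j₀ i).mp hp
      exact ⟨x0, h1, by rw [h3, h2]; rfl⟩
    · obtain ⟨x0, h1, h2, h3⟩ := (hBN.2 j₀ i).mp hn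
      exact ⟨x0, h1, by rw [h3, h2]; rfl⟩
  intro x y hxy
  cases hx : x j₀ with
  | false =>
    have h1 : f x i = f x0 i := hind x x0 (hx.trans hx0.symm)
    have hy : y j₀ = true := by rw [hxy, hx]; rfl
    have h2 : f y i = f (Function.update x0 j₀ true) i :=
      hind y _ (by rw [hy, Function.update_self])
    rw [h2, hflip, h1]
  | true =>
    have hy : y j₀ = false := by rw [hxy, hx]; rfl
    have h1 : f y i = f x0 i := hind y x0 (hy.trans hx0.symm)
    have h2 : f x i = f (Function.update x0 j₀ true) i :=
      hind x _ (by rw [hx, Function.update_self])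
    rw [h1, h2, hflip, Bool.not_not]

end AuxLemmas

/-- Lemma 3 of the paper. If a signed digraph `G` has an initial
cycle, then no Boolean network on `G` is synchronizing. -/
theorem statement4 {V : Type} [Fintype V] [DecidableEq V]
    (G : SignedDigraph V) (h : G.HasInitialCycle) :
    ∀ f : (V → Bool) → V → Bool, IsBNOn f G → ¬ Synchronizing f := by
  classical
  obtain ⟨S, ⟨_, hinit⟩, hSne, hdeg, _⟩ := h
  intro f hBN hsync
  -- every vertex of `S` has a unique in-neighbor, which lies in `S`, and
  -- flipping that in-neighbor flips the update
  have key : ∀ i, i ∈ S → ∃ j₀, j₀ ∈ S ∧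
      ∀ x y : V → Bool, y j₀ = ! (x j₀) → f y i = ! (f x i) := by
    intro i hi
    have hd := hdeg i hi
    simp only [SignedDigraph.inDegree] at hd
    have hcases :
        ({j | (G.induce S).pos j i}.ncard = 1 ∧ {j | (G.induce S).neg j i}.ncard = 0)
        ∨ ({j | (G.induce S).pos j i}.ncard = 0 ∧ {j | (G.induce S).neg j i}.ncard = 1) := by
      omega
    rcases hcases with ⟨hp1, hn0⟩ | ⟨hp0, hn1⟩
    · obtain ⟨j₀, hj⟩ := Set.ncard_eq_one.mp hp1
      have hN : {j | (G.induce S).neg j i} = ∅ :=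
        (Set.ncard_eq_zero (Set.toFinite _)).mp hn0
      have hj₀mem : j₀ ∈ {j | (G.induce S).pos j i} := by
        rw [hj]; exact Set.mem_singleton _
      obtain ⟨hj₀S, hiS, hpos⟩ := hj₀mem
      refine ⟨j₀, hj₀S, flip_key f G hBN (Or.inl hpos) ?_⟩
      intro j hne harc
      have hjS : j ∈ S := hinit j i hi harc
      rcases harc with hp | hn
      · have hmem : j ∈ {j | (G.induce S).pos j i} := ⟨hjS, hi, hp⟩
        rw [hj] at hmem
        exact hne hmem
      · have hmem : j ∈ {j | (G.induce S).neg j i} := ⟨hjS, hi, hn⟩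
        rw [hN] at hmem
        exact hmem
    · obtain ⟨j₀, hj⟩ := Set.ncard_eq_one.mp hn1
      have hN : {j | (G.induce S).pos j i} = ∅ :=
        (Set.ncard_eq_zero (Set.toFinite _)).mp hp0
      have hj₀mem : j₀ ∈ {j | (G.induce S).neg j i} := by
        rw [hj]; exact Set.mem_singleton _
      obtain ⟨hj₀S, hiS, hneg⟩ := hj₀mem
      refine ⟨j₀, hj₀S, flip_key f G hBN (Or.inr hneg) ?_⟩
      intro j hne harc
      have hjS : j ∈ S := hinit j i hi harc
      rcases harc with hp | hn
      · have hmem : j ∈ {j | (G.induce S).pos j i} := ⟨hjS, hi, hp⟩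
        rw [hN] at hmem
        exact hmem
      · have hmem : j ∈ {j | (G.induce S).neg j i} := ⟨hjS, hi, hn⟩
        rw [hj] at hmem
        exact hne hmem
  choose p hpS hflip using key
  obtain ⟨w, cst, hcst⟩ := hsync
  -- configurations that are complementary on `S` stay complementary on `S`
  have inv : ∀ (u : List V) (a b : V → Bool), (∀ j, j ∈ S → b j = ! (a j)) →
      ∀ j, j ∈ S → wordUpdate f u b j = ! (wordUpdate f u a j) := by
    intro u
    induction u with
    | nil => intro a b hab; exact hab
    | cons i u ih =>
      intro a b hab
      have hstep : ∀ j, j ∈ S → localUpdate f i b j = ! (localUpdate f i a j) := by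
        intro j hj
        rcases eq_or_ne j i with rfl | hne
        · simp only [localUpdate, Function.update_self]
          exact hflip j hj a b (hab (p j hj) (hpS j hj))
        · simp only [localUpdate, Function.update_of_ne hne]
          exact hab j hj
      intro j hj
      exact ih (localUpdate f i a) (localUpdate f i b) hstep j hj
  obtain ⟨u, hu⟩ := hSne
  have h1 := inv w (fun _ => false) (fun j => if j ∈ S then true else false)
    (fun j hj => by simp [hj]) u hu
  rw [hcst (fun _ => false), hcst (fun j => if j ∈ S then true else false)] at h1
  exact absurd h1 (by cases cst u <;> simp)
end

section
/- Let f be a Boolean network on a signed digraph G, let i be a vertex and a ∈ {0,1}. Let w be a canalizing word from (i,a) with image b, and suppose that no source of G belongs to {w}. Then for every j ∈ {w}, G has a path from i to j whose internal vertices all lie in {w}, and this path is positive if a = b_j and negative otherwise. -/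
namespace Statement8Aux

variable {V : Type*} [DecidableEq V]

/-- Override `x` by `b` on the set of letters of `u`. -/
def ov (b : V → Bool) (u : List V) (x : V → Bool) : V → Bool :=
  fun v => if v ∈ u then b v else x v

lemma ov_nil (b : V → Bool) (x : V → Bool) : ov b [] x = x :=
  funext fun v => by simp [ov]

lemma ov_cons (b : V → Bool) (k : V) (u : List V) (x : V → Bool) :
    ov b (k :: u) x = ov b u (Function.update x k (b k)) := by
  funext v
  by_cases hv : v ∈ u
  · simp [ov, hv]
  · by_cases hvk : v = k
    · subst hvk; simp [ov, hv]
    · simp [ov, hv, hvk, Function.update_apply]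

lemma ov_update_not_mem (b : V → Bool) {i : V} {u : List V} (hi : i ∉ u)
    (x : V → Bool) (c : Bool) :
    ov b u (Function.update x i c) = Function.update (ov b u x) i c := by
  funext v
  by_cases hv : v ∈ u
  · have hvi : v ≠ i := fun h => hi (h ▸ hv)
    simp [ov, hv, Function.update_apply, hvi]
  · by_cases hvi : v = i
    · subst hvi; simp [ov, hv, Function.update_apply]
    · simp [ov, hv, Function.update_apply, hvi]

lemma exists_flip (b : V → Bool) (h : (V → Bool) → Bool) (c : Bool) :
    ∀ (u : List V) (y : V → Bool), h (ov b u y) = c → h y ≠ c →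
      ∃ k ∈ u, ∃ z : V → Bool, z k = !(b k) ∧ h z ≠ c ∧
        h (Function.update z k (b k)) = c := by
  intro u
  induction u with
  | nil => intro y h1 h2; rw [ov_nil] at h1; exact absurd h1 h2
  | cons k u ih =>
    intro y h1 h2
    rw [ov_cons] at h1
    by_cases hy' : h (Function.update y k (b k)) = c
    · by_cases hyk : y k = b k
      · rw [← hyk, Function.update_eq_self] at hy'
        exact absurd hy' h2
      · refine ⟨k, List.mem_cons_self, y, ?_, h2, hy'⟩
        cases hbk : b k <;> cases hk : y k <;> simp_all
    · obtain ⟨k', hk', z, hz⟩ := ih (Function.update y k (b k)) h1 hy'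
      exact ⟨k', List.mem_cons_of_mem _ hk', z, hz⟩

lemma arc_of_flip {G : SignedDigraph V} {f : (V → Bool) → V → Bool} (hf : IsBNOn f G)
    {z : V → Bool} {k j : V} {c e : Bool} (hz : z k = c) (h1 : f z j = e)
    (h2 : f (Function.update z k (!c)) j = !e) :
    if (c == e) then G.pos k j else G.neg k j := by
  cases c with
  | false =>
    cases e with
    | false =>
      exact (hf.1 k j).mpr ⟨z, hz, h1, by simpa using h2⟩
    | true =>
      exact (hf.2 k j).mpr ⟨z, hz, h1, by simpa using h2⟩
  | true =>
    have hz' : Function.update (Function.update z k false) k true = z := by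
      rw [Function.update_idem, ← hz, Function.update_eq_self]
    cases e with
    | false =>
      refine (hf.2 k j).mpr ⟨Function.update z k false, by simp, ?_, ?_⟩
      · simpa using h2
      · rw [hz']; exact h1
    | true =>
      refine (hf.1 k j).mpr ⟨Function.update z k false, by simp, ?_, ?_⟩
      · simpa using h2
      · rw [hz']; exact h1

lemma walkEnd_cons (x : V) (s : V × Bool) (p : List (V × Bool)) :
    walkEnd x (s :: p) = walkEnd s.1 p := by
  show ((s :: p).map Prod.fst).getLastD x = (p.map Prod.fst).getLastD s.1
  rw [List.map_cons, List.getLastD_cons]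

lemma walkEnd_concat (x : V) (p : List (V × Bool)) (q : V × Bool) :
    walkEnd x (p ++ [q]) = q.1 := by
  induction p generalizing x with
  | nil => simp [walkEnd]
  | cons s p ih => rw [List.cons_append, walkEnd_cons, ih]

lemma isWalk_concat (G : SignedDigraph V) (x : V) (p : List (V × Bool)) (q : V × Bool) :
    G.IsWalk x p →
    (if q.2 then G.pos (walkEnd x p) q.1 else G.neg (walkEnd x p) q.1) →
    G.IsWalk x (p ++ [q]) := by
  induction p generalizing x with
  | nil =>
    intro _ h
    exact ⟨by simpa [walkEnd] using h, trivial⟩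
  | cons s p ih =>
    intro hw h
    exact ⟨hw.1, ih s.1 hw.2 (by rwa [walkEnd_cons] at h)⟩

lemma walkSign_concat (p : List (V × Bool)) (q : V × Bool) :
    walkSign (p ++ [q]) = (walkSign p == q.2) := by
  simp [walkSign, List.foldl_append]

lemma wordUpdate_append (f : (V → Bool) → V → Bool) (u v : List V) (x : V → Bool) :
    wordUpdate f (u ++ v) x = wordUpdate f v (wordUpdate f u x) := by
  simp [wordUpdate, List.foldl_append]

lemma wordUpdate_not_mem (f : (V → Bool) → V → Bool) :
    ∀ (u : List V) (x : V → Bool) (j : V), j ∉ u → wordUpdate f u x j = x j := by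
  intro u
  induction u with
  | nil => intro x j _; rfl
  | cons k u ih =>
    intro x j hj
    have hjk : j ≠ k := fun h => hj (h ▸ List.mem_cons_self)
    have hju : j ∉ u := fun h => hj (List.mem_cons_of_mem _ h)
    rw [show wordUpdate f (k :: u) x = wordUpdate f u (localUpdate f k x) from rfl,
        ih _ j hju]
    simp [localUpdate, Function.update_apply, hjk]

lemma beq_trans_eq (a x y : Bool) : ((a == x) == (x == y)) = (a == y) := by
  cases a <;> cases x <;> cases y <;> rfl

lemma not_beq_not (a c : Bool) : ((!a) == (!c)) = (a == c) := by
  cases a <;> cases c <;> rfl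

end Statement8Aux

open Statement8Aux

/-- Lemma 7 of the paper. Let `f` be a Boolean network on a signed
digraph `G`, `i` a vertex and `a ∈ {0,1}`. Let `w` be a canalizing word from `(i,a)`
with image `b`, with no source of `G` in `{w}`. Then for every `j ∈ {w}`, `G` has a
path from `i` to `j` whose internal vertices all lie in `{w}`, positive if `a = b_j`
and negative otherwise. -/
theorem statement8 {V : Type} [Fintype V] [DecidableEq V]
    (G : SignedDigraph V)
    (f : (V → Bool) → V → Bool) (hf : IsBNOn f G)
    (i : V) (a : Bool) (w : List V) (b : V → Bool)
    (hw : Canalizing f i a w b)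
    (hsrc : ∀ j ∈ w, ¬ G.IsSource j) :
    ∀ j ∈ w, ∃ steps : List (V × Bool),
      G.IsPathFrom i steps j ∧
      (∀ v ∈ (steps.map Prod.fst).dropLast, v ∈ w) ∧
      walkSign steps = (a == b j) := by
  obtain ⟨hiw, hnd, hcan⟩ := hw
  suffices key : ∀ n : ℕ, ∀ u (j : V) v, u.length < n → w = u ++ j :: v →
      ∃ steps : List (V × Bool), G.IsWalk i steps ∧ walkEnd i steps = j ∧
        (i :: steps.map Prod.fst).Nodup ∧
        (∀ t ∈ steps.map Prod.fst, t = j ∨ t ∈ u) ∧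
        walkSign steps = (a == b j) by
    intro j hj
    obtain ⟨u, v, huv⟩ := List.append_of_mem hj
    obtain ⟨steps, h1, h2, h3, h4, h5⟩ := key (u.length + 1) u j v (Nat.lt_succ_self _) huv
    refine ⟨steps, ⟨⟨h1, h3⟩, h2⟩, ?_, h5⟩
    intro t ht
    have ht' : t ∈ steps.map Prod.fst := (List.dropLast_sublist _).subset ht
    rcases h4 t ht' with rfl | htu
    · exact hj
    · rw [huv]; exact List.mem_append_left _ htu
  intro n
  induction n with
  | zero => intro u j v h _; exact absurd h (Nat.not_lt_zero _)
  | succ n ih =>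
    intro u j v hlen hw'
    have hjw : j ∈ w := by
      rw [hw']; exact List.mem_append_right _ (List.mem_cons_self)
    have hij : i ≠ j := fun h => hiw (h ▸ hjw)
    have hnd' := hnd
    rw [hw', List.nodup_append] at hnd'
    obtain ⟨hndu, hndjv, hdisj⟩ := hnd'
    have hjv : j ∉ v := (List.nodup_cons.mp hndjv).1
    have hju : j ∉ u := fun h => hdisj _ h _ List.mem_cons_self rfl
    have hiu : i ∉ u := fun h => hiw (hw' ▸ List.mem_append_left _ h)
    -- the state after updating along the prefix `u` is the override of `x` by `b` on `u`
    have hpre : ∀ x : V → Bool, x i = a → wordUpdate f u x = ov b u x := by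
      intro x hx
      funext t
      by_cases htu : t ∈ u
      · have h1 := hcan x hx t (by rw [hw']; exact List.mem_append_left _ htu)
        rw [hw', wordUpdate_append,
            wordUpdate_not_mem f (j :: v) _ t (fun h => hdisj _ htu _ h rfl)] at h1
        rw [h1]; simp [ov, htu]
      · rw [wordUpdate_not_mem f u x t htu]; simp [ov, htu]
    -- pointwise canalizing fact
    have hpoint : ∀ x : V → Bool, x i = a → f (ov b u x) j = b j := by
      intro x hx
      have h1 := hcan x hx j hjw
      rw [hw', wordUpdate_append] at h1
      have h2 : wordUpdate f (j :: v) (wordUpdate f u x) j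
          = f (wordUpdate f u x) j := by
        rw [show wordUpdate f (j :: v) (wordUpdate f u x)
              = wordUpdate f v (localUpdate f j (wordUpdate f u x)) from rfl,
            wordUpdate_not_mem f v _ j hjv]
        simp [localUpdate]
      rw [← hpre x hx]
      rw [h2] at h1
      exact h1
    by_cases hC : ∀ x : V → Bool, f (ov b u x) j = b j
    · -- Case B : constant on the whole cube after override; find an in-arc inside `u`
      have hso : ∃ t, G.Arc t j := by
        by_contra hcon
        push_neg at hcon
        exact hsrc j hjw hcon
      obtain ⟨k0, hk0⟩ := hso
      have hk0' : G.pos k0 j ∨ G.neg k0 j := hk0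
      have hex : ∃ y : V → Bool, f y j ≠ b j := by
        rcases hk0' with hp | hn
        · obtain ⟨x0, _, hx1, hx2⟩ := (hf.1 k0 j).mp hp
          cases hb : b j
          · exact ⟨_, by rw [hx2]; simp⟩
          · exact ⟨_, by rw [hx1]; simp⟩
        · obtain ⟨x0, _, hx1, hx2⟩ := (hf.2 k0 j).mp hn
          cases hb : b j
          · exact ⟨_, by rw [hx1]; simp⟩
          · exact ⟨_, by rw [hx2]; simp⟩
      obtain ⟨y, hy⟩ := hex
      obtain ⟨k, hku, z, hzk, hz1, hz2⟩ :=
        exists_flip b (fun x => f x j) (b j) u y (hC y) hy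
      have hz1' : f z j = !(b j) := by
        cases h : f z j <;> cases hb : b j <;> simp_all
      have harc := arc_of_flip hf hzk hz1' (by simpa [Bool.not_not] using hz2)
      rw [not_beq_not] at harc
      obtain ⟨u₁, u₂, hu⟩ := List.append_of_mem hku
      have hw'' : w = u₁ ++ k :: (u₂ ++ j :: v) := by
        rw [hw', hu, List.append_assoc]; rfl
      have hlen' : u₁.length < n := by
        have h1 : u.length ≤ n := Nat.lt_succ_iff.mp hlen
        rw [hu] at h1
        simp only [List.length_append, List.length_cons] at h1
        omega
      obtain ⟨steps₀, hW, hE, hN, hS, hsgn⟩ := ih u₁ k (u₂ ++ j :: v) hlen' hw''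
      refine ⟨steps₀ ++ [(j, b k == b j)], ?_, ?_, ?_, ?_, ?_⟩
      · exact isWalk_concat G i steps₀ (j, b k == b j) hW (by rw [hE]; exact harc)
      · exact walkEnd_concat i steps₀ (j, b k == b j)
      · have hjsteps : j ∉ steps₀.map Prod.fst := by
          intro h
          rcases hS j h with rfl | h'
          · exact hju (hu ▸ hku)
          · exact hju (hu ▸ List.mem_append_left _ h')
        rw [show (i :: ((steps₀ ++ [(j, b k == b j)]).map Prod.fst))
              = (i :: steps₀.map Prod.fst) ++ [j] by simp]
        rw [List.nodup_append]
        refine ⟨hN, List.nodup_singleton _, ?_⟩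
        intro t ht s htj hts
        rw [List.mem_singleton] at htj
        subst htj
        subst hts
        rcases List.mem_cons.mp ht with h | h
        · exact hij h.symm
        · exact hjsteps h
      · intro t ht
        rw [List.map_append, List.mem_append] at ht
        rcases ht with h | h
        · rcases hS t h with rfl | h'
          · right; exact hu ▸ hku
          · right; rw [hu]; exact List.mem_append_left _ h'
        · left; simpa using h
      · rw [walkSign_concat, hsgn]
        exact beq_trans_eq a (b k) (b j)
    · -- Case A : direct arc from `i` to `j`
      push_neg at hC
      obtain ⟨y, hy⟩ := hC
      have hyi : y i = !a := by
        by_cases h : y i = a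
        · exact absurd (hpoint y h) hy
        · cases a <;> cases h' : y i <;> simp_all
      have hqi : ov b u y i = !a := by simp [ov, hiu, hyi]
      have hqa : f (Function.update (ov b u y) i a) j = b j := by
        rw [← ov_update_not_mem b hiu y a]
        exact hpoint _ (by simp)
      have hq1 : f (ov b u y) j = !(b j) := by
        cases h : f (ov b u y) j <;> cases hb : b j <;> simp_all
      have harc := arc_of_flip hf hqi hq1 (by simpa [Bool.not_not] using hqa)
      rw [not_beq_not] at harc
      refine ⟨[(j, a == b j)], ⟨harc, trivial⟩, by simp [walkEnd], by simp [hij], ?_, ?_⟩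
      · intro t ht; left; simpa using ht
      · simp [walkSign]
end

section
/- Let G be a signed digraph with vertex set V in which all cycles have the same sign (i.e., either every cycle of G is positive, or every cycle of G is negative), and let f be a Boolean network on G with exactly one fixed point. Then there is a word π in which every vertex of V occurs exactly once, such that every word containing π as a (not necessarily contiguous) subsequence synchronizes f; in particular, π itself synchronizes f. -/
/-! ### Auxiliary lemmas for statement9 -/

section WalkLemmas

variable {V : Type*}

lemma walkEnd_nil (u : V) : walkEnd u ([] : List (V × Bool)) = u := rfl

lemma walkEnd_cons (u : V) (p : V × Bool) (l : List (V × Bool)) :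
    walkEnd u (p :: l) = walkEnd p.1 l := by
  unfold walkEnd
  rw [List.map_cons, List.getLastD_cons]

lemma walkEnd_append (u : V) (A B : List (V × Bool)) :
    walkEnd u (A ++ B) = walkEnd (walkEnd u A) B := by
  induction A generalizing u with
  | nil => rfl
  | cons p A ih => rw [List.cons_append, walkEnd_cons, walkEnd_cons, ih]

lemma walkEnd_concat (u : V) (L : List (V × Bool)) (p : V × Bool) :
    walkEnd u (L ++ [p]) = p.1 := by
  rw [walkEnd_append]; rfl

lemma walkSign_shift (l : List (V × Bool)) (a : Bool) :
    l.foldl (fun acc s => acc == s.2) a = (a == walkSign l) := by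
  induction l generalizing a with
  | nil => cases a <;> rfl
  | cons p l ih =>
    show l.foldl _ (a == p.2) = _
    rw [ih]
    have hc : walkSign (p :: l) = ((true == p.2) == walkSign l) := by
      show l.foldl _ (true == p.2) = _
      rw [ih]
    rw [hc]
    cases a <;> cases p.2 <;> cases walkSign l <;> rfl

lemma walkSign_cons (p : V × Bool) (l : List (V × Bool)) :
    walkSign (p :: l) = (p.2 == walkSign l) := by
  show l.foldl _ (true == p.2) = _
  rw [walkSign_shift]
  cases p.2 <;> cases walkSign l <;> rfl

lemma walkSign_append (A B : List (V × Bool)) :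
    walkSign (A ++ B) = (walkSign A == walkSign B) := by
  unfold walkSign
  rw [List.foldl_append]
  exact walkSign_shift B _

lemma isWalk_append {G : SignedDigraph V} {A B : List (V × Bool)} {u : V} :
    G.IsWalk u (A ++ B) ↔ G.IsWalk u A ∧ G.IsWalk (walkEnd u A) B := by
  induction A generalizing u with
  | nil => simp [SignedDigraph.IsWalk, walkEnd_nil]
  | cons p A ih =>
    rw [List.cons_append]
    show (_ ∧ G.IsWalk p.1 (A ++ B)) ↔ _
    rw [ih, walkEnd_cons]
    show _ ↔ ((_ ∧ G.IsWalk p.1 A) ∧ _)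
    tauto

lemma isWalk_mono {G G' : SignedDigraph V} (hp : ∀ j i, G.pos j i → G'.pos j i)
    (hn : ∀ j i, G.neg j i → G'.neg j i) :
    ∀ (steps : List (V × Bool)) (u : V), G.IsWalk u steps → G'.IsWalk u steps := by
  intro steps
  induction steps with
  | nil => intro u h; trivial
  | cons p l ih =>
    intro u h
    obtain ⟨h1, h2⟩ := h
    refine ⟨?_, ih _ h2⟩
    cases hb : p.2 <;> rw [hb] at h1 <;> simp only [if_true, if_false, Bool.false_eq_true, ↓reduceIte] at * <;>
      [exact hn _ _ h1; exact hp _ _ h1]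

lemma noNegativeCycle_mono {G G' : SignedDigraph V} (hp : ∀ j i, G.pos j i → G'.pos j i)
    (hn : ∀ j i, G.neg j i → G'.neg j i) (h : G'.NoNegativeCycle) : G.NoNegativeCycle := by
  intro u steps hc
  exact h u steps ⟨hc.1, isWalk_mono hp hn _ _ hc.2.1, hc.2.2⟩

lemma noPositiveCycle_mono {G G' : SignedDigraph V} (hp : ∀ j i, G.pos j i → G'.pos j i)
    (hn : ∀ j i, G.neg j i → G'.neg j i) (h : G'.NoPositiveCycle) : G.NoPositiveCycle := by
  intro u steps hc
  exact h u steps ⟨hc.1, isWalk_mono hp hn _ _ hc.2.1, hc.2.2⟩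

/-- Predicate `P` holds along all arcs of a walk. -/
def GoodFrom (P : V → V → Bool → Prop) : V → List (V × Bool) → Prop
  | _, [] => True
  | u, p :: rest => P u p.1 p.2 ∧ GoodFrom P p.1 rest

lemma goodFrom_append {P : V → V → Bool → Prop} {A B : List (V × Bool)} {u : V} :
    GoodFrom P u (A ++ B) ↔ GoodFrom P u A ∧ GoodFrom P (walkEnd u A) B := by
  induction A generalizing u with
  | nil => simp [GoodFrom, walkEnd_nil]
  | cons p A ih =>
    rw [List.cons_append]
    show (_ ∧ GoodFrom P p.1 (A ++ B)) ↔ _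
    rw [ih, walkEnd_cons]
    show _ ↔ ((_ ∧ GoodFrom P p.1 A) ∧ _)
    tauto

/-- Decomposition of a non-simple nonempty closed walk. -/
lemma closed_walk_decomp {V : Type*} {u : V} {steps : List (V × Bool)}
    (hne : steps ≠ [])
    (hnd : ¬ (u :: (steps.map Prod.fst).dropLast).Nodup) :
    ∃ w A B C, steps = A ++ B ++ C ∧ B ≠ [] ∧ C ≠ [] ∧
      walkEnd u A = w ∧ walkEnd w B = w := by
  classical
  obtain ⟨e, L, hLe⟩ : ∃ e L, steps = L ++ [e] := by
    rcases List.eq_nil_or_concat steps with h | ⟨L, e, h⟩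
    · exact absurd h hne
    · exact ⟨e, L, by rw [h, List.concat_eq_append]⟩
  subst hLe
  have hmap : ((L ++ [e]).map Prod.fst).dropLast = L.map Prod.fst := by
    rw [← List.map_dropLast]
    simp
  rw [hmap] at hnd
  obtain ⟨a, hdup⟩ := List.exists_duplicate_iff_not_nodup.2 hnd
  have hsub : List.Sublist [a, a] (u :: L.map Prod.fst) := List.duplicate_iff_sublist.1 hdup
  cases hsub with
  | cons _ hs =>
    -- internal duplicate in L
    obtain ⟨r₁, r₂, hr, ha1, hs2⟩ := List.cons_sublist_iff.1 hs
    obtain ⟨X, Y, hXY⟩ := List.append_of_mem ha1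
    obtain ⟨q₁, q₂, hq, haq, -⟩ := List.cons_sublist_iff.1 hs2
    obtain ⟨Z, W, hZW⟩ := List.append_of_mem haq
    have hL : L.map Prod.fst = X ++ a :: ((Y ++ Z) ++ a :: (W ++ q₂)) := by
      rw [hr, hXY, hq, hZW]; simp
    obtain ⟨P, L2, hPL, hmP, hmL2⟩ := List.map_eq_append_iff.1 hL
    obtain ⟨p, L3, hp3, hpa, hmL3⟩ : ∃ p L3, L2 = p :: L3 ∧ p.1 = a ∧
        L3.map Prod.fst = (Y ++ Z) ++ a :: (W ++ q₂) := by
      cases L2 with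
      | nil => simp at hmL2
      | cons p L3 =>
        simp only [List.map_cons, List.cons.injEq] at hmL2
        exact ⟨p, L3, rfl, hmL2.1, hmL2.2⟩
    obtain ⟨R, L4, hRL, hmR, hmL4⟩ := List.map_eq_append_iff.1 hmL3
    obtain ⟨q, Rest, hq4, hqa⟩ : ∃ q Rest, L4 = q :: Rest ∧ q.1 = a := by
      cases L4 with
      | nil => simp at hmL4
      | cons q Rest =>
        simp only [List.map_cons, List.cons.injEq] at hmL4
        exact ⟨q, Rest, rfl, hmL4.1⟩
    refine ⟨a, P ++ [p], R ++ [q], Rest ++ [e], ?_, by simp, by simp, ?_, ?_⟩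
    · rw [hPL, hp3, hRL, hq4]; simp
    · rw [walkEnd_concat]; exact hpa
    · rw [walkEnd_concat]; exact hqa
  | cons_cons _ hs =>
    -- here the duplicated vertex is the base point (u = a)
    obtain ⟨r₁, r₂, hr, ha1, -⟩ := List.cons_sublist_iff.1 hs
    obtain ⟨X, Y, hXY⟩ := List.append_of_mem ha1
    have hL : L.map Prod.fst = X ++ u :: (Y ++ r₂) := by
      rw [hr, hXY]; simp
    obtain ⟨P, L2, hPL, hmP, hmL2⟩ := List.map_eq_append_iff.1 hL
    obtain ⟨p, Q, hp2, hpu⟩ : ∃ p Q, L2 = p :: Q ∧ p.1 = u := by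
      cases L2 with
      | nil => simp at hmL2
      | cons p Q =>
        simp only [List.map_cons, List.cons.injEq] at hmL2
        exact ⟨p, Q, rfl, hmL2.1⟩
    refine ⟨u, [], P ++ [p], Q ++ [e], ?_, by simp, by simp, rfl, ?_⟩
    · rw [hPL, hp2]; simp
    · rw [walkEnd_concat]; exact hpu

end WalkLemmas
section ClosedWalks

variable {V : Type*}

/-- In a digraph with no negative cycle, every closed walk is positive. -/
lemma closedWalk_sign {G : SignedDigraph V} (hG : G.NoNegativeCycle) :
    ∀ (n : ℕ) (steps : List (V × Bool)) (u : V), steps.length ≤ n →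
      G.IsWalk u steps → walkEnd u steps = u → walkSign steps = true := by
  intro n
  induction n with
  | zero =>
    intro steps u hlen _ _
    have : steps = [] := List.eq_nil_of_length_eq_zero (Nat.le_zero.1 hlen)
    subst this; rfl
  | succ n ih =>
    intro steps u hlen hw hc
    rcases eq_or_ne steps [] with h | hne
    · subst h; rfl
    by_cases hnd : (u :: (steps.map Prod.fst).dropLast).Nodup
    · have : G.IsCycle u steps := ⟨hne, hw, hc, hnd⟩
      rcases hcyc : walkSign steps with h | h
      · exact absurd (hG u steps this) (by rw [hcyc]; simp)
      · rfl
    · obtain ⟨w, A, B, C, hsplit, hBne, hCne, hA, hB⟩ := closed_walk_decomp hne hnd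
      subst hsplit
      rw [isWalk_append] at hw
      obtain ⟨hwAB, hwC⟩ := hw
      rw [isWalk_append] at hwAB
      obtain ⟨hwA, hwB'⟩ := hwAB
      rw [hA] at hwB'
      -- walkEnd computations
      have hendsteps : walkEnd u (A ++ B ++ C) = walkEnd w C := by
        rw [walkEnd_append, walkEnd_append, hA, hB]
      have hCend : walkEnd w C = u := by rw [← hendsteps]; exact hc
      have hlenB : B.length ≤ n := by
        have := List.length_append (as := A ++ B) (bs := C)
        simp only [List.length_append] at hlen ⊢
        have hCpos : 0 < C.length := List.length_pos_iff.2 hCne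
        omega
      have hlenAC : (A ++ C).length ≤ n := by
        simp only [List.length_append] at hlen ⊢
        have hBpos : 0 < B.length := List.length_pos_iff.2 hBne
        omega
      have hsB : walkSign B = true := ih B w hlenB hwB' hB
      rw [walkEnd_append, hA] at hwC
      have hwAC : G.IsWalk u (A ++ C) := by
        rw [isWalk_append, hA]
        refine ⟨hwA, ?_⟩
        rw [← hB]
        exact hwC
      have hACc : walkEnd u (A ++ C) = u := by
        rw [walkEnd_append, hA, ← hB]
        rw [hB]
        exact hCend
      have hsAC : walkSign (A ++ C) = true := ih (A ++ C) u hlenAC hwAC hACc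
      rw [walkSign_append] at hsAC
      rw [walkSign_append, walkSign_append, hsB]
      revert hsAC
      cases walkSign A <;> cases walkSign C <;> simp

/-- From a nonempty closed walk all whose arcs satisfy `P`, extract a simple cycle
all whose arcs satisfy `P`. -/
lemma closedWalk_cycle {G : SignedDigraph V} (P : V → V → Bool → Prop) :
    ∀ (n : ℕ) (steps : List (V × Bool)) (u : V), steps.length ≤ n → steps ≠ [] →
      G.IsWalk u steps → walkEnd u steps = u → GoodFrom P u steps →
      ∃ u' steps', G.IsCycle u' steps' ∧ GoodFrom P u' steps' := by
  intro n
  induction n with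
  | zero =>
    intro steps u hlen hne _ _ _
    exact absurd (List.eq_nil_of_length_eq_zero (Nat.le_zero.1 hlen)) hne
  | succ n ih =>
    intro steps u hlen hne hw hc hg
    by_cases hnd : (u :: (steps.map Prod.fst).dropLast).Nodup
    · exact ⟨u, steps, ⟨hne, hw, hc, hnd⟩, hg⟩
    · obtain ⟨w, A, B, C, hsplit, hBne, hCne, hA, hB⟩ := closed_walk_decomp hne hnd
      subst hsplit
      rw [isWalk_append] at hw
      obtain ⟨hwAB, hwC⟩ := hw
      rw [isWalk_append] at hwAB
      obtain ⟨hwA, hwB'⟩ := hwAB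
      rw [hA] at hwB'
      have hgB : GoodFrom P w B := by
        rw [goodFrom_append, goodFrom_append, hA] at hg
        exact hg.1.2
      have hlenB : B.length ≤ n := by
        simp only [List.length_append] at hlen ⊢
        have hCpos : 0 < C.length := List.length_pos_iff.2 hCne
        omega
      exact ih B w hlenB hBne hwB' hB hgB

/-- Telescoping sign along a walk whose arcs are coherent with `x`. -/
lemma goodFrom_sign (x : V → Bool) :
    ∀ (steps : List (V × Bool)) (u : V),
      GoodFrom (fun a b s => s = (x a == x b)) u steps →
      walkSign steps = (x u == x (walkEnd u steps)) := by
  intro steps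
  induction steps with
  | nil => intro u _; simp [walkEnd_nil, walkSign]
  | cons p l ihl =>
    intro u hg
    obtain ⟨h1, h2⟩ := hg
    rw [walkSign_cons, walkEnd_cons, ihl p.1 h2, h1]
    cases x u <;> cases x p.1 <;> cases x (walkEnd p.1 l) <;> rfl

end ClosedWalks

section ReachLemmas

variable {V : Type*}

namespace SignedDigraph

lemma reach_refl (G : SignedDigraph V) (u : V) : G.Reach u u := ⟨[], trivial, rfl⟩

lemma reach_trans {G : SignedDigraph V} {u v w : V} (h1 : G.Reach u v) (h2 : G.Reach v w) :
    G.Reach u w := by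
  obtain ⟨s1, hw1, he1⟩ := h1
  obtain ⟨s2, hw2, he2⟩ := h2
  exact ⟨s1 ++ s2, isWalk_append.2 ⟨hw1, by rw [he1]; exact hw2⟩,
    by rw [walkEnd_append, he1, he2]⟩

lemma reach_of_arc {G : SignedDigraph V} {u v : V} (h : G.Arc u v) : G.Reach u v := by
  rcases h with h | h
  · exact ⟨[(v, true)], ⟨by simpa using h, trivial⟩, rfl⟩
  · exact ⟨[(v, false)], ⟨by simpa using h, trivial⟩, rfl⟩

end SignedDigraph

/-- Existence of an initial strong component (inside the set of arc-sources `T`). -/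
lemma exists_initial {G : SignedDigraph V} [DecidableEq V] [Fintype V] {T : Finset V}
    (hT : T.Nonempty) (hsrc : ∀ j i, G.Arc j i → j ∈ T) :
    ∃ u₀ ∈ T, ∀ j i, G.Arc j i → G.SameComp u₀ i → G.SameComp u₀ j := by
  classical
  obtain ⟨u₀, hu₀T, hmin⟩ := T.exists_min_image
    (fun v => (Finset.univ.filter (fun z => G.Reach z v)).card) hT
  refine ⟨u₀, hu₀T, ?_⟩
  intro j i harc hsc
  have hji : G.Reach j u₀ := SignedDigraph.reach_trans (SignedDigraph.reach_of_arc harc) hsc.2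
  have hjT : j ∈ T := hsrc j i harc
  have hsubset : (Finset.univ.filter (fun z => G.Reach z j)) ⊆
      (Finset.univ.filter (fun z => G.Reach z u₀)) := by
    intro z hz
    simp only [Finset.mem_filter, Finset.mem_univ, true_and] at hz ⊢
    exact SignedDigraph.reach_trans hz hji
  have hcard := hmin j hjT
  have heq := Finset.eq_of_subset_of_card_le hsubset hcard
  have hu₀mem : u₀ ∈ (Finset.univ.filter (fun z => G.Reach z j)) := by
    rw [heq]
    simp only [Finset.mem_filter, Finset.mem_univ, true_and]
    exact SignedDigraph.reach_refl G u₀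
  simp only [Finset.mem_filter, Finset.mem_univ, true_and] at hu₀mem
  exact ⟨hu₀mem, hji⟩

/-- Balancing of strong components in a graph with no negative cycle. -/
lemma balanced_sigma {G : SignedDigraph V} (hNN : G.NoNegativeCycle) (u₀ : V) :
    ∃ σ : V → Bool, ∀ j i s, G.SameComp u₀ j → G.SameComp u₀ i →
      (if s then G.pos j i else G.neg j i) → s = (σ j == σ i) := by
  classical
  have hclosed : ∀ (W : List (V × Bool)) (v : V), G.IsWalk v W → walkEnd v W = v →
      walkSign W = true := fun W v h1 h2 => closedWalk_sign hNN W.length W v le_rfl h1 h2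
  refine ⟨fun v => if h : G.Reach u₀ v then walkSign h.choose else false, ?_⟩
  have hsig : ∀ v (h : G.Reach u₀ v), G.Reach v u₀ → ∀ W, G.IsWalk u₀ W → walkEnd u₀ W = v →
      walkSign W = (if h' : G.Reach u₀ v then walkSign h'.choose else false) := by
    intro v h hback W hW hWe
    rw [dif_pos h]
    obtain ⟨B, hB, hBe⟩ := hback
    have h1 : walkSign (W ++ B) = true := by
      apply hclosed
      · exact isWalk_append.2 ⟨hW, by rw [hWe]; exact hB⟩
      · rw [walkEnd_append, hWe, hBe]
    have h2 : walkSign (h.choose ++ B) = true := by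
      apply hclosed
      · exact isWalk_append.2 ⟨h.choose_spec.1, by rw [h.choose_spec.2]; exact hB⟩
      · rw [walkEnd_append, h.choose_spec.2, hBe]
    rw [walkSign_append] at h1 h2
    revert h1 h2
    cases walkSign W <;> cases walkSign B <;> cases walkSign h.choose <;> simp
  intro j i s hj hi harc
  have hrj : G.Reach u₀ j := hj.1
  have hri : G.Reach u₀ i := hi.1
  -- sign of walk to j
  have hsj : walkSign hrj.choose = (if h' : G.Reach u₀ j then walkSign h'.choose else false) := by
    rw [dif_pos hrj]
  -- extended walk to i
  have hwi : G.IsWalk u₀ (hrj.choose ++ [(i, s)]) := by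
    refine isWalk_append.2 ⟨hrj.choose_spec.1, ?_⟩
    rw [hrj.choose_spec.2]
    exact ⟨harc, trivial⟩
  have hwie : walkEnd u₀ (hrj.choose ++ [(i, s)]) = i := walkEnd_concat _ _ _
  have hsi := hsig i hri hi.2 _ hwi hwie
  rw [walkSign_append] at hsi
  have hsj' := (hsig j hrj hj.2 _ hrj.choose_spec.1 hrj.choose_spec.2)
  have hsingle : walkSign [(i, s)] = s := by cases s <;> rfl
  rw [hsingle] at hsi
  show s = ((if h : G.Reach u₀ j then walkSign h.choose else false) ==
    (if h : G.Reach u₀ i then walkSign h.choose else false))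
  rw [← hsj', ← hsi]
  cases walkSign hrj.choose <;> cases s <;> rfl

end ReachLemmas
section NetworkLemmas

variable {V : Type} [Fintype V] [DecidableEq V]

/-- Arc of the interaction graph of `f`. -/
def ArcF (f : (V → Bool) → V → Bool) (j i : V) : Prop := posIArc f j i ∨ negIArc f j i

/-- The signed interaction digraph of `f`. -/
def IG (f : (V → Bool) → V → Bool) : SignedDigraph V := ⟨posIArc f, negIArc f⟩

lemma arc_of_flip {f : (V → Bool) → V → Bool} {z : V → Bool} {j i : V} {b : Bool}
    (h1 : z j ≠ b) (h2 : f z i ≠ f (Function.update z j b) i) : ArcF f j i := by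
  cases hzj : z j with
  | false =>
    have hb : b = true := by
      cases b
      · rw [hzj] at h1; exact absurd rfl h1
      · rfl
    subst hb
    cases hfz : f z i with
    | false =>
      left
      refine ⟨z, hzj, hfz, ?_⟩
      cases h : f (Function.update z j true) i
      · exact absurd (by rw [hfz, h]) h2
      · rfl
    | true =>
      right
      refine ⟨z, hzj, hfz, ?_⟩
      cases h : f (Function.update z j true) i
      · rfl
      · exact absurd (by rw [hfz, h]) h2
  | true =>
    have hb : b = false := by
      cases b
      · rfl
      · rw [hzj] at h1; exact absurd rfl h1
    subst hb
    set w := Function.update z j false with hw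
    have hzw : z = Function.update w j true := by
      funext k
      by_cases hk : k = j
      · subst hk; rw [Function.update_self, hzj]
      · rw [Function.update_of_ne hk, hw, Function.update_of_ne hk]
    have hwj : w j = false := Function.update_self _ _ _
    cases hfw : f w i with
    | false =>
      left
      refine ⟨w, hwj, hfw, ?_⟩
      rw [← hzw]
      cases h : f z i
      · exact absurd (by rw [h, hfw]) h2
      · rfl
    | true =>
      right
      refine ⟨w, hwj, hfw, ?_⟩
      rw [← hzw]
      cases h : f z i
      · rfl
      · exact absurd (by rw [h, hfw]) h2

lemma exists_arc_of_ne {f : (V → Bool) → V → Bool} :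
    ∀ (n : ℕ) (z z' : V → Bool) (i : V),
      (Finset.univ.filter (fun j => z j ≠ z' j)).card ≤ n →
      f z i ≠ f z' i → ∃ j, z j ≠ z' j ∧ ArcF f j i := by
  intro n
  induction n with
  | zero =>
    intro z z' i hcard hne
    exfalso
    apply hne
    have : z = z' := by
      funext k
      by_contra hk
      have : k ∈ Finset.univ.filter (fun j => z j ≠ z' j) := by
        simp only [Finset.mem_filter, Finset.mem_univ, true_and]; exact hk
      have := Finset.card_pos.2 ⟨k, this⟩
      omega
    rw [this]
  | succ n ih =>
    intro z z' i hcard hne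
    have hzne : z ≠ z' := fun h => hne (by rw [h])
    obtain ⟨j₀, hj₀⟩ : ∃ j₀, z j₀ ≠ z' j₀ := by
      by_contra h
      push_neg at h
      exact hzne (funext h)
    set z'' := Function.update z j₀ (z' j₀) with hz''
    by_cases hmid : f z'' i = f z' i
    · have hstep : f z i ≠ f z'' i := by rw [hmid]; exact hne
      exact ⟨j₀, hj₀, arc_of_flip (Ne.symm (Ne.symm hj₀)) hstep⟩
    · have hsub : (Finset.univ.filter (fun j => z'' j ≠ z' j)) ⊆
          (Finset.univ.filter (fun j => z j ≠ z' j)).erase j₀ := by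
        intro k hk
        simp only [Finset.mem_filter, Finset.mem_univ, true_and] at hk
        rcases eq_or_ne k j₀ with hkj | hkj
        · subst hkj
          rw [hz''] at hk
          rw [Function.update_self] at hk
          exact absurd rfl hk
        · rw [Finset.mem_erase]
          refine ⟨hkj, ?_⟩
          simp only [Finset.mem_filter, Finset.mem_univ, true_and]
          rw [hz'', Function.update_of_ne hkj] at hk
          exact hk
      have hcard' : (Finset.univ.filter (fun j => z'' j ≠ z' j)).card ≤ n := by
        have h1 := Finset.card_le_card hsub
        have h2 : ((Finset.univ.filter (fun j => z j ≠ z' j)).erase j₀).card <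
            (Finset.univ.filter (fun j => z j ≠ z' j)).card := by
          apply Finset.card_erase_lt_of_mem
          simp only [Finset.mem_filter, Finset.mem_univ, true_and]
          exact hj₀
        omega
      obtain ⟨j, hj1, hj2⟩ := ih z'' z' i hcard' hmid
      refine ⟨j, ?_, hj2⟩
      rcases eq_or_ne j j₀ with h | h
      · subst h; rw [hz'', Function.update_self] at hj1; exact absurd rfl hj1
      · rw [hz'', Function.update_of_ne h] at hj1; exact hj1

lemma exists_arc_of_ne' {f : (V → Bool) → V → Bool} {z z' : V → Bool} {i : V}
    (h : f z i ≠ f z' i) : ∃ j, z j ≠ z' j ∧ ArcF f j i :=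
  exists_arc_of_ne _ z z' i le_rfl h

/-- If all arcs into `i` come from `S`, then `f · i` only depends on coordinates in `S`. -/
lemma eq_of_agree_on {f : (V → Bool) → V → Bool} {S : Set V} {i : V}
    (hS : ∀ j, ArcF f j i → j ∈ S) {z z' : V → Bool} (hag : ∀ t ∈ S, z t = z' t) :
    f z i = f z' i := by
  by_contra hne
  obtain ⟨j, hj1, hj2⟩ := exists_arc_of_ne' hne
  exact hj1 (hag j (hS j hj2))

lemma mono_of_no_neg {f : (V → Bool) → V → Bool} {i : V}
    (hn : ∀ j, ¬ negIArc f j i) :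
    ∀ (n : ℕ) (z z' : V → Bool),
      (Finset.univ.filter (fun j => z j ≠ z' j)).card ≤ n →
      (∀ k, z k = true → z' k = true) → f z i = true → f z' i = true := by
  intro n
  induction n with
  | zero =>
    intro z z' hcard hle hfz
    have : z = z' := by
      funext k
      by_contra hk
      have hm : k ∈ Finset.univ.filter (fun j => z j ≠ z' j) := by
        simp only [Finset.mem_filter, Finset.mem_univ, true_and]; exact hk
      have := Finset.card_pos.2 ⟨k, hm⟩
      omega
    rw [← this]; exact hfz
  | succ n ih =>
    intro z z' hcard hle hfz
    by_cases hzz : z = z'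
    · rw [← hzz]; exact hfz
    obtain ⟨j₀, hj₀⟩ : ∃ j₀, z j₀ ≠ z' j₀ := by
      by_contra h; push_neg at h; exact hzz (funext h)
    have hzj₀ : z j₀ = false := by
      cases h : z j₀
      · rfl
      · exact absurd (by rw [h, hle j₀ h] : z j₀ = z' j₀) hj₀
    have hz'j₀ : z' j₀ = true := by
      cases h : z' j₀
      · rw [hzj₀, h] at hj₀; exact absurd rfl hj₀
      · rfl
    set z'' := Function.update z j₀ true with hz''
    have hfz'' : f z'' i = true := by
      by_contra h
      have hfz''f : f z'' i = false := by
        cases hh : f z'' i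
        · rfl
        · exact absurd hh h
      exact hn j₀ ⟨z, hzj₀, hfz, hfz''f⟩
    have hle'' : ∀ k, z'' k = true → z' k = true := by
      intro k hk
      rcases eq_or_ne k j₀ with h | h
      · subst h; exact hz'j₀
      · rw [hz'', Function.update_of_ne h] at hk; exact hle k hk
    have hcard'' : (Finset.univ.filter (fun j => z'' j ≠ z' j)).card ≤ n := by
      have hsub : (Finset.univ.filter (fun j => z'' j ≠ z' j)) ⊆
          (Finset.univ.filter (fun j => z j ≠ z' j)).erase j₀ := by
        intro k hk
        simp only [Finset.mem_filter, Finset.mem_univ, true_and] at hk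
        rcases eq_or_ne k j₀ with hkj | hkj
        · subst hkj; rw [hz'', Function.update_self] at hk
          rw [hz'j₀] at hk; exact absurd rfl hk
        · rw [Finset.mem_erase]
          refine ⟨hkj, ?_⟩
          simp only [Finset.mem_filter, Finset.mem_univ, true_and]
          rw [hz'', Function.update_of_ne hkj] at hk
          exact hk
      have h1 := Finset.card_le_card hsub
      have h2 : ((Finset.univ.filter (fun j => z j ≠ z' j)).erase j₀).card <
          (Finset.univ.filter (fun j => z j ≠ z' j)).card := by
        apply Finset.card_erase_lt_of_mem
        simp only [Finset.mem_filter, Finset.mem_univ, true_and]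
        exact hj₀
      omega
    exact ih z'' z' hcard'' hle'' hfz''

end NetworkLemmas
section TwistLemmas

set_option linter.unusedSectionVars false

variable {V : Type} [Fintype V] [DecidableEq V]

/-- The network obtained by switching the coordinates in which `σ` is `true`. -/
def twistF (f : (V → Bool) → V → Bool) (σ : V → Bool) : (V → Bool) → V → Bool :=
  fun z i => xor (f (fun k => xor (z k) (σ k)) i) (σ i)

lemma xor_update (z σ : V → Bool) (j : V) (b : Bool) :
    (fun k => xor (Function.update z j b k) (σ k)) =
      Function.update (fun k => xor (z k) (σ k)) j (xor b (σ j)) := by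
  funext k
  by_cases hk : k = j
  · subst hk; rw [Function.update_self, Function.update_self]
  · rw [Function.update_of_ne hk, Function.update_of_ne hk]

lemma twist_twist (f : (V → Bool) → V → Bool) (σ : V → Bool) : twistF (twistF f σ) σ = f := by
  funext z i
  show xor (xor (f (fun k => xor (xor (z k) (σ k)) (σ k)) i) (σ i)) (σ i) = f z i
  have : (fun k => xor (xor (z k) (σ k)) (σ k)) = z := by
    funext k; cases z k <;> cases σ k <;> rfl
  rw [this]
  cases f z i <;> cases σ i <;> rfl

lemma twist_pos {f : (V → Bool) → V → Bool} {σ : V → Bool} {j i : V}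
    (h : posIArc (twistF f σ) j i) :
    if σ j == σ i then posIArc f j i else negIArc f j i := by
  obtain ⟨z, hzj, h0, h1⟩ := h
  have hu : ∀ (w : V → Bool), twistF f σ w i = xor (f (fun k => xor (w k) (σ k)) i) (σ i) :=
    fun _ => rfl
  set u := fun k => xor (z k) (σ k) with hudef
  have huj : u j = σ j := by rw [hudef]; simp only [hzj]; cases σ j <;> rfl
  have hfu : f u i = σ i := by
    have := h0
    rw [hu] at this
    revert this
    cases f u i <;> cases σ i <;> simp
  have hupdate : (fun k => xor (Function.update z j true k) (σ k)) =
      Function.update u j (!(σ j)) := by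
    rw [xor_update]
    congr 1
    cases σ j <;> rfl
  have hfu' : f (Function.update u j (!(σ j))) i = !(σ i) := by
    have := h1
    rw [hu, hupdate] at this
    revert this
    cases f (Function.update u j (!(σ j))) i <;> cases σ i <;> simp
  cases hsj : σ j with
  | false =>
    have huj' : u j = false := by rw [huj, hsj]
    cases hsi : σ i with
    | false =>
      show posIArc f j i
      refine ⟨u, huj', by rw [hfu, hsi], ?_⟩
      have : f (Function.update u j true) i = true := by
        have := hfu'; rw [hsj, hsi] at this; exact this
      exact this
    | true =>
      show negIArc f j i
      refine ⟨u, huj', by rw [hfu, hsi], ?_⟩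
      have := hfu'; rw [hsj, hsi] at this; exact this
  | true =>
    -- base point is u with u j = true; use w := update u j false
    set w := Function.update u j false with hwdef
    have hwj : w j = false := Function.update_self _ _ _
    have huw : u = Function.update w j true := by
      funext k
      by_cases hk : k = j
      · subst hk; rw [Function.update_self, huj, hsj]
      · rw [Function.update_of_ne hk, hwdef, Function.update_of_ne hk]
    have hfw : f w i = !(σ i) := by
      have : Function.update u j (!(σ j)) = w := by rw [hsj]; rfl
      rw [← this]; exact hfu'
    cases hsi : σ i with
    | false =>
      show negIArc f j i
      refine ⟨w, hwj, by rw [hfw, hsi]; rfl, ?_⟩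
      rw [← huw, hfu, hsi]
    | true =>
      show posIArc f j i
      refine ⟨w, hwj, by rw [hfw, hsi]; rfl, ?_⟩
      rw [← huw, hfu, hsi]

lemma twist_neg {f : (V → Bool) → V → Bool} {σ : V → Bool} {j i : V}
    (h : negIArc (twistF f σ) j i) :
    if σ j == σ i then negIArc f j i else posIArc f j i := by
  obtain ⟨z, hzj, h0, h1⟩ := h
  have hu : ∀ (w : V → Bool), twistF f σ w i = xor (f (fun k => xor (w k) (σ k)) i) (σ i) :=
    fun _ => rfl
  set u := fun k => xor (z k) (σ k) with hudef
  have huj : u j = σ j := by rw [hudef]; simp only [hzj]; cases σ j <;> rfl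
  have hfu : f u i = !(σ i) := by
    have := h0
    rw [hu] at this
    revert this
    cases f u i <;> cases σ i <;> simp
  have hupdate : (fun k => xor (Function.update z j true k) (σ k)) =
      Function.update u j (!(σ j)) := by
    rw [xor_update]
    congr 1
    cases σ j <;> rfl
  have hfu' : f (Function.update u j (!(σ j))) i = σ i := by
    have := h1
    rw [hu, hupdate] at this
    revert this
    cases f (Function.update u j (!(σ j))) i <;> cases σ i <;> simp
  cases hsj : σ j with
  | false =>
    have huj' : u j = false := by rw [huj, hsj]
    cases hsi : σ i with
    | false =>
      show negIArc f j i
      refine ⟨u, huj', by rw [hfu, hsi]; rfl, ?_⟩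
      have := hfu'; rw [hsj, hsi] at this; exact this
    | true =>
      show posIArc f j i
      refine ⟨u, huj', by rw [hfu, hsi]; rfl, ?_⟩
      have := hfu'; rw [hsj, hsi] at this; exact this
  | true =>
    set w := Function.update u j false with hwdef
    have hwj : w j = false := Function.update_self _ _ _
    have huw : u = Function.update w j true := by
      funext k
      by_cases hk : k = j
      · subst hk; rw [Function.update_self, huj, hsj]
      · rw [Function.update_of_ne hk, hwdef, Function.update_of_ne hk]
    have hfw : f w i = σ i := by
      have : Function.update u j (!(σ j)) = w := by rw [hsj]; rfl
      rw [← this]; exact hfu'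
    cases hsi : σ i with
    | false =>
      show posIArc f j i
      refine ⟨w, hwj, by rw [hfw, hsi], ?_⟩
      rw [← huw, hfu, hsi]; rfl
    | true =>
      show negIArc f j i
      refine ⟨w, hwj, by rw [hfw, hsi], ?_⟩
      rw [← huw, hfu, hsi]; rfl

lemma twist_pos' {f : (V → Bool) → V → Bool} {σ : V → Bool} {j i : V}
    (h : posIArc f j i) :
    if σ j == σ i then posIArc (twistF f σ) j i else negIArc (twistF f σ) j i := by
  have := @twist_pos V _ _ (twistF f σ) σ j i (by rw [twist_twist]; exact h)
  exact this

lemma twist_neg' {f : (V → Bool) → V → Bool} {σ : V → Bool} {j i : V}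
    (h : negIArc f j i) :
    if σ j == σ i then negIArc (twistF f σ) j i else posIArc (twistF f σ) j i := by
  have := @twist_neg V _ _ (twistF f σ) σ j i (by rw [twist_twist]; exact h)
  exact this

end TwistLemmas
section LockLemmas

set_option linter.unusedSectionVars false

variable {V : Type} [Fintype V] [DecidableEq V]

/-- Locking lemma: on a balanced, initial, source-free set `S`, the patterns `σ|S` and
`!σ|S` are locally fixed. -/
lemma lock {f : (V → Bool) → V → Bool} {S : Set V} {σ : V → Bool}
    (harcp : ∀ i ∈ S, ∀ j, posIArc f j i → j ∈ S ∧ (σ j == σ i) = true)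
    (harcn : ∀ i ∈ S, ∀ j, negIArc f j i → j ∈ S ∧ (σ j == σ i) = false)
    (hin : ∀ i ∈ S, ∃ j, ArcF f j i) :
    (∀ z, (∀ t ∈ S, z t = σ t) → ∀ i ∈ S, f z i = σ i) ∧
    (∀ z, (∀ t ∈ S, z t = !(σ t)) → ∀ i ∈ S, f z i = !(σ i)) := by
  set g := twistF f σ with hg
  -- no negative g-arcs into S, and all g-arcs into S come from S
  have hnoneg : ∀ i ∈ S, ∀ j, ¬ negIArc g j i := by
    intro i hi j hneg
    have := twist_neg hneg
    by_cases hss : (σ j == σ i) = true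
    · rw [if_pos hss] at this
      exact absurd hss (by rw [(harcn i hi j this).2]; simp)
    · rw [if_neg hss] at this
      exact hss ((harcp i hi j this).2)
  have hfromS : ∀ i ∈ S, ∀ j, ArcF g j i → j ∈ S := by
    intro i hi j harc
    rcases harc with h | h
    · have := twist_pos h
      by_cases hss : (σ j == σ i) = true
      · rw [if_pos hss] at this; exact (harcp i hi j this).1
      · rw [if_neg hss] at this; exact (harcn i hi j this).1
    · have := twist_neg h
      by_cases hss : (σ j == σ i) = true
      · rw [if_pos hss] at this; exact (harcn i hi j this).1
      · rw [if_neg hss] at this; exact (harcp i hi j this).1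
  have hposin : ∀ i ∈ S, ∃ j, posIArc g j i := by
    intro i hi
    obtain ⟨j, hj⟩ := hin i hi
    rcases hj with h | h
    · have := twist_pos' (σ := σ) h
      have hs2 := (harcp i hi j h).2
      rw [if_pos hs2] at this
      exact ⟨j, this⟩
    · have := twist_neg' (σ := σ) h
      have hs2 := (harcn i hi j h).2
      rw [if_neg (by rw [hs2]; simp)] at this
      exact ⟨j, this⟩
  -- g is monotone at each i ∈ S, nonconstant, and depends only on S
  have hgtop : ∀ i ∈ S, g (fun _ => true) i = true := by
    intro i hi
    obtain ⟨j, z, hzj, h0, h1⟩ := hposin i hi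
    exact mono_of_no_neg (hnoneg i hi) (Fintype.card V)
      (Function.update z j true) (fun _ => true) (by
        apply le_trans (Finset.card_le_card (Finset.subset_univ _))
        simp [Finset.card_univ]) (fun k _ => rfl) h1
  have hgbot : ∀ i ∈ S, g (fun _ => false) i = false := by
    intro i hi
    obtain ⟨j, z, hzj, h0, h1⟩ := hposin i hi
    by_contra h
    have hgb : g (fun _ => false) i = true := by
      cases hh : g (fun _ => false) i
      · exact absurd hh h
      · rfl
    have := mono_of_no_neg (hnoneg i hi) (Fintype.card V)
      (fun _ => false) z (by
        apply le_trans (Finset.card_le_card (Finset.subset_univ _))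
        simp [Finset.card_univ]) (fun k hk => by exact absurd hk (by simp)) hgb
    rw [h0] at this
    exact absurd this (by simp)
  have hdepS : ∀ i ∈ S, ∀ z z', (∀ t ∈ S, z t = z' t) → g z i = g z' i := by
    intro i hi z z' hag
    exact eq_of_agree_on (fun j hj => hfromS i hi j hj) hag
  constructor
  · intro z hz i hi
    -- twisted state: y := z ⊕ σ is ⊥ on S
    set y := fun k => xor (z k) (σ k) with hy
    have hyS : ∀ t ∈ S, y t = false := by
      intro t ht
      rw [hy]
      simp only
      rw [hz t ht]
      cases σ t <;> rfl
    have hgy : g y i = false := by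
      rw [hdepS i hi y (fun _ => false) hyS]
      exact hgbot i hi
    have : xor (f (fun k => xor (y k) (σ k)) i) (σ i) = false := hgy
    have hyz : (fun k => xor (y k) (σ k)) = z := by
      funext k
      rw [hy]
      simp only
      cases z k <;> cases σ k <;> rfl
    rw [hyz] at this
    revert this
    cases f z i <;> cases σ i <;> simp
  · intro z hz i hi
    set y := fun k => xor (z k) (σ k) with hy
    have hyS : ∀ t ∈ S, y t = true := by
      intro t ht
      rw [hy]
      simp only
      rw [hz t ht]
      cases σ t <;> rfl
    have hgy : g y i = true := by
      rw [hdepS i hi y (fun _ => true) hyS]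
      exact hgtop i hi
    have : xor (f (fun k => xor (y k) (σ k)) i) (σ i) = true := hgy
    have hyz : (fun k => xor (y k) (σ k)) = z := by
      funext k
      rw [hy]
      simp only
      cases z k <;> cases σ k <;> rfl
    rw [hyz] at this
    revert this
    cases f z i <;> cases σ i <;> simp

end LockLemmas
section FreezeLemmas

set_option linter.unusedSectionVars false

variable {V : Type} [Fintype V] [DecidableEq V]

/-- Arcs only come from coordinates the network actually depends on. -/
lemma arc_mem {f : (V → Bool) → V → Bool} {T : Finset V}
    (hdep : ∀ z z', (∀ t ∈ T, z t = z' t) → ∀ i, f z i = f z' i)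
    {j i : V} (h : ArcF f j i) : j ∈ T := by
  by_contra hjT
  rcases h with ⟨z, hzj, h0, h1⟩ | ⟨z, hzj, h0, h1⟩ <;>
  · have : f z i = f (Function.update z j true) i := by
      apply hdep
      intro t ht
      rw [Function.update_of_ne (fun h => hjT (by rw [← h]; exact ht))]
    rw [h0, h1] at this
    exact Bool.noConfusion this

/-- The frozen network: coordinates in `S` are hard-wired to `σ`. -/
def frz (f : (V → Bool) → V → Bool) (S : Finset V) (σ : V → Bool) :
    (V → Bool) → V → Bool :=
  fun z i => f (fun k => if k ∈ S then σ k else z k) i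

lemma frz_ov_update {S : Finset V} {σ z : V → Bool} {j : V} {b : Bool} (hj : j ∉ S) :
    (fun k => if k ∈ S then σ k else Function.update z j b k) =
      Function.update (fun k => if k ∈ S then σ k else z k) j b := by
  funext k
  by_cases hk : k = j
  · subst hk; rw [Function.update_self, if_neg hj, Function.update_self]
  · rw [Function.update_of_ne hk, Function.update_of_ne hk]

lemma frz_pos {f : (V → Bool) → V → Bool} {S : Finset V} {σ : V → Bool} {j i : V}
    (h : posIArc (frz f S σ) j i) : j ∉ S ∧ posIArc f j i := by
  obtain ⟨z, hzj, h0, h1⟩ := h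
  have hjS : j ∉ S := by
    intro hjS
    have : (fun k => if k ∈ S then σ k else z k) =
        (fun k => if k ∈ S then σ k else Function.update z j true k) := by
      funext k
      by_cases hk : k ∈ S
      · rw [if_pos hk, if_pos hk]
      · rw [if_neg hk, if_neg hk, Function.update_of_ne (fun h => hk (by rw [h]; exact hjS))]
    have heq : frz f S σ z i = frz f S σ (Function.update z j true) i := by
      unfold frz; rw [this]
    rw [h0, h1] at heq
    exact Bool.noConfusion heq
  refine ⟨hjS, ⟨(fun k => if k ∈ S then σ k else z k), by show (if j ∈ S then σ j else z j) = false; rw [if_neg hjS]; exact hzj, h0, ?_⟩⟩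
  have := h1
  unfold frz at this
  rw [frz_ov_update hjS] at this
  exact this

lemma frz_neg {f : (V → Bool) → V → Bool} {S : Finset V} {σ : V → Bool} {j i : V}
    (h : negIArc (frz f S σ) j i) : j ∉ S ∧ negIArc f j i := by
  obtain ⟨z, hzj, h0, h1⟩ := h
  have hjS : j ∉ S := by
    intro hjS
    have : (fun k => if k ∈ S then σ k else z k) =
        (fun k => if k ∈ S then σ k else Function.update z j true k) := by
      funext k
      by_cases hk : k ∈ S
      · rw [if_pos hk, if_pos hk]
      · rw [if_neg hk, if_neg hk, Function.update_of_ne (fun h => hk (by rw [h]; exact hjS))]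
    have heq : frz f S σ z i = frz f S σ (Function.update z j true) i := by
      unfold frz; rw [this]
    rw [h0, h1] at heq
    exact Bool.noConfusion heq
  refine ⟨hjS, ⟨(fun k => if k ∈ S then σ k else z k), by show (if j ∈ S then σ j else z j) = false; rw [if_neg hjS]; exact hzj, h0, ?_⟩⟩
  have := h1
  unfold frz at this
  rw [frz_ov_update hjS] at this
  exact this

lemma frz_noNeg {f : (V → Bool) → V → Bool} {S : Finset V} {σ : V → Bool}
    (h : (IG f).NoNegativeCycle) : (IG (frz f S σ)).NoNegativeCycle :=
  noNegativeCycle_mono (fun j i hp => (frz_pos hp).2) (fun j i hn => (frz_neg hn).2) h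

/-- Finding a locked component: if every vertex of `T` has an in-arc, there is a
nonempty `S ⊆ T` and a pattern `σ` such that both `σ` and `!σ` are locked on `S`. -/
lemma complock {f : (V → Bool) → V → Bool} {T : Finset V}
    (hdep : ∀ z z', (∀ t ∈ T, z t = z' t) → ∀ i, f z i = f z' i)
    (hNN : (IG f).NoNegativeCycle)
    (hin : ∀ v ∈ T, ∃ j, ArcF f j v)
    (hTne : T.Nonempty) :
    ∃ (S : Finset V) (σ : V → Bool), S.Nonempty ∧ S ⊆ T ∧
      (∀ z, (∀ t ∈ S, z t = σ t) → ∀ i ∈ S, f z i = σ i) ∧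
      (∀ z, (∀ t ∈ S, z t = !(σ t)) → ∀ i ∈ S, f z i = !(σ i)) := by
  classical
  obtain ⟨u₀, hu₀T, hinit⟩ := exists_initial (G := IG f) hTne
    (fun j i h => arc_mem hdep h)
  obtain ⟨σ, hσ⟩ := balanced_sigma hNN u₀
  set S : Finset V := T.filter (fun v => (IG f).SameComp u₀ v) with hS
  have hmemS : ∀ v, v ∈ S ↔ v ∈ T ∧ (IG f).SameComp u₀ v := by
    intro v; rw [hS]; simp [Finset.mem_filter]
  have hu₀S : u₀ ∈ S := (hmemS u₀).2 ⟨hu₀T,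
    ⟨SignedDigraph.reach_refl _ _, SignedDigraph.reach_refl _ _⟩⟩
  have harcp : ∀ i ∈ (S : Set V), ∀ j, posIArc f j i → j ∈ (S : Set V) ∧ (σ j == σ i) = true := by
    intro i hi j hp
    have hiS : i ∈ S := hi
    obtain ⟨hiT, hisc⟩ := (hmemS i).1 hiS
    have hjsc : (IG f).SameComp u₀ j := hinit j i (Or.inl hp) hisc
    have hjT : j ∈ T := arc_mem hdep (Or.inl hp)
    have hsign := hσ j i true hjsc hisc (by exact hp)
    exact ⟨(hmemS j).2 ⟨hjT, hjsc⟩, hsign.symm⟩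
  have harcn : ∀ i ∈ (S : Set V), ∀ j, negIArc f j i → j ∈ (S : Set V) ∧ (σ j == σ i) = false := by
    intro i hi j hn
    have hiS : i ∈ S := hi
    obtain ⟨hiT, hisc⟩ := (hmemS i).1 hiS
    have hjsc : (IG f).SameComp u₀ j := hinit j i (Or.inr hn) hisc
    have hjT : j ∈ T := arc_mem hdep (Or.inr hn)
    have hsign := hσ j i false hjsc hisc (by exact hn)
    exact ⟨(hmemS j).2 ⟨hjT, hjsc⟩, by rw [← hsign]⟩
  have hinS : ∀ i ∈ (S : Set V), ∃ j, ArcF f j i := by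
    intro i hi
    exact hin i ((hmemS i).1 hi).1
  obtain ⟨hl1, hl2⟩ := lock harcp harcn hinS
  refine ⟨S, σ, ⟨u₀, hu₀S⟩, fun v hv => ((hmemS v).1 hv).1, ?_, ?_⟩
  · intro z hz i hi
    exact hl1 z (fun t ht => hz t ht) i hi
  · intro z hz i hi
    exact hl2 z (fun t ht => hz t ht) i hi

/-- A fixed point of the frozen network extends to a fixed point of `f`. -/
lemma frz_fix {f : (V → Bool) → V → Bool} {S : Finset V} {σ : V → Bool}
    (hlock : ∀ z, (∀ t ∈ S, z t = σ t) → ∀ i ∈ (S : Set V), f z i = σ i)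
    {y : V → Bool} (hy : ∀ i, frz f S σ y i = y i) :
    ∀ i, f (fun k => if k ∈ S then σ k else y k) i = (fun k => if k ∈ S then σ k else y k) i := by
  intro i
  show _ = if i ∈ S then σ i else y i
  by_cases hi : i ∈ S
  · rw [if_pos hi]
    exact hlock _ (fun t ht => by
      show (if t ∈ S then σ t else y t) = σ t
      rw [if_pos ht]) i hi
  · rw [if_neg hi]
    exact hy i

/-- Every network with no negative cycle has a fixed point. -/
lemma exist_fix : ∀ (T : Finset V) (f : (V → Bool) → V → Bool),
    (∀ z z', (∀ t ∈ T, z t = z' t) → ∀ i, f z i = f z' i) →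
    (IG f).NoNegativeCycle → ∃ y, ∀ i, f y i = y i := by
  classical
  intro T
  induction T using Finset.strongInduction with
  | _ T ih =>
    intro f hdep hNN
    rcases T.eq_empty_or_nonempty with hT | hTne
    · subst hT
      refine ⟨fun i => f (fun _ => false) i, ?_⟩
      intro i
      exact hdep _ _ (fun t ht => absurd ht (Finset.notMem_empty t)) i
    by_cases hcv : ∃ v ∈ T, ∀ z z', f z v = f z' v
    · obtain ⟨v, hvT, hconst⟩ := hcv
      set c : V → Bool := fun _ => f (fun _ => false) v with hc
      set f' := frz f {v} c with hf'
      have hdep' : ∀ z z', (∀ t ∈ T.erase v, z t = z' t) → ∀ i, f' z i = f' z' i := by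
        intro z z' hag i
        apply hdep
        intro t ht
        by_cases hv : t = v
        · subst hv; simp
        · simp only [Finset.mem_singleton, hv, if_false]
          exact hag t (Finset.mem_erase.2 ⟨hv, ht⟩)
      have hNN' : (IG f').NoNegativeCycle := frz_noNeg hNN
      obtain ⟨y, hy⟩ := ih (T.erase v) (Finset.erase_ssubset hvT) f' hdep' hNN'
      refine ⟨fun k => if k ∈ ({v} : Finset V) then c k else y k, ?_⟩
      intro i
      have hov : (fun k => if k ∈ ({v} : Finset V) then c k else
          (fun k => if k ∈ ({v} : Finset V) then c k else y k) k) =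
          (fun k => if k ∈ ({v} : Finset V) then c k else y k) := by
        funext k
        by_cases hk : k ∈ ({v} : Finset V) <;> simp [hk]
      by_cases hi : i = v
      · rw [hi]
        have hcv : f (fun k => if k ∈ ({v} : Finset V) then c k else y k) v = c v :=
          hconst _ _
        rw [hcv]
        simp
      · have h1 : f (fun k => if k ∈ ({v} : Finset V) then c k else y k) i =
            f' (fun k => if k ∈ ({v} : Finset V) then c k else y k) i := by
          unfold f'
          unfold frz
          rw [hov]
        rw [h1]
        have h2 : f' (fun k => if k ∈ ({v} : Finset V) then c k else y k) i = f' y i := by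
          apply hdep'
          intro t ht
          simp [Finset.mem_singleton, (Finset.mem_erase.1 ht).1]
        rw [h2, hy i]
        simp [Finset.mem_singleton, hi]
    · push_neg at hcv
      have hin : ∀ v ∈ T, ∃ j, ArcF f j v := by
        intro v hvT
        obtain ⟨z, z', hne⟩ := hcv v hvT
        obtain ⟨j, _, hj⟩ := exists_arc_of_ne' hne
        exact ⟨j, hj⟩
      obtain ⟨S, σ, hSne, hST, hl1, hl2⟩ := complock hdep hNN hin hTne
      set f₁ := frz f S σ with hf₁
      have hdep₁ : ∀ z z', (∀ t ∈ T \ S, z t = z' t) → ∀ i, f₁ z i = f₁ z' i := by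
        intro z z' hag i
        apply hdep
        intro t ht
        by_cases hts : t ∈ S
        · rw [if_pos hts, if_pos hts]
        · rw [if_neg hts, if_neg hts]
          exact hag t (Finset.mem_sdiff.2 ⟨ht, hts⟩)
      have hNN₁ : (IG f₁).NoNegativeCycle := frz_noNeg hNN
      have hssub : T \ S ⊂ T := by
        obtain ⟨s₀, hs₀⟩ := hSne
        refine Finset.ssubset_iff_of_subset (Finset.sdiff_subset) |>.2 ⟨s₀, hST hs₀, ?_⟩
        simp [hs₀]
      obtain ⟨y, hy⟩ := ih (T \ S) hssub f₁ hdep₁ hNN₁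
      exact ⟨_, frz_fix (fun z hz i hi => hl1 z hz i hi) hy⟩

end FreezeLemmas
section NegCase

set_option linter.unusedSectionVars false

variable {V : Type} [Fintype V] [DecidableEq V]

/-- At a fixed point, every non-constant coordinate receives an arc whose sign is
coherent with the fixed point. -/
lemma arc_signed_of_fix {f : (V → Bool) → V → Bool} {x : V → Bool} (hx : ∀ i, f x i = x i)
    {v : V} (hnc : ∃ z z', f z v ≠ f z' v) :
    ∃ j, if x j == x v then posIArc f j v else negIArc f j v := by
  classical
  set g := twistF f x with hg
  have hgval : ∀ z, g z v = xor (f (fun k => xor (z k) (x k)) v) (x v) := fun _ => rfl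
  have hxid : (fun k => xor ((fun _ => false) k) (x k)) = x := by
    funext k; cases x k <;> rfl
  have hg0 : g (fun _ => false) v = false := by
    rw [hgval, hxid, hx v]
    cases x v <;> rfl
  have hgtrue : ∃ y, g y v = true := by
    obtain ⟨z, z', hne⟩ := hnc
    have h1 : g (fun k => xor (z k) (x k)) v = xor (f z v) (x v) := by
      rw [hgval]
      congr 1
      congr 1
      funext k
      cases z k <;> cases x k <;> rfl
    have h2 : g (fun k => xor (z' k) (x k)) v = xor (f z' v) (x v) := by
      rw [hgval]
      congr 1
      congr 1
      funext k
      cases z' k <;> cases x k <;> rfl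
    rcases Bool.eq_false_or_eq_true (xor (f z v) (x v)) with h | h
    · exact ⟨_, by rw [h1, h]⟩
    · refine ⟨fun k => xor (z' k) (x k), ?_⟩
      rw [h2]
      revert hne h
      cases f z v <;> cases f z' v <;> cases x v <;> simp
  obtain ⟨y₀, hy₀⟩ := hgtrue
  have hPne : (Finset.univ.filter (fun z : V → Bool => g z v = true)).Nonempty :=
    ⟨y₀, by simp [hy₀]⟩
  obtain ⟨z₀, hz₀P, hmin⟩ := Finset.exists_min_image _
    (fun z : V → Bool => (Finset.univ.filter (fun k => z k = true)).card) hPne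
  simp only [Finset.mem_filter, Finset.mem_univ, true_and] at hz₀P
  obtain ⟨j, hj⟩ : ∃ j, z₀ j = true := by
    by_contra h
    push_neg at h
    have hzf : z₀ = (fun _ => false) := by
      funext k
      have hk' := h k
      cases hk : z₀ k
      · rfl
      · exact absurd hk hk'
    rw [hzf, hg0] at hz₀P
    exact Bool.noConfusion hz₀P
  set z₁ := Function.update z₀ j false with hz₁
  have hz₁v : g z₁ v = false := by
    by_contra h
    have hz₁P : g z₁ v = true := by
      cases hh : g z₁ v
      · exact absurd hh h
      · rfl
    have hmem : z₁ ∈ Finset.univ.filter (fun z : V → Bool => g z v = true) := by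
      simp [hz₁P]
    have hcard := hmin z₁ hmem
    have hsub : (Finset.univ.filter (fun k => z₁ k = true)) ⊆
        (Finset.univ.filter (fun k => z₀ k = true)).erase j := by
      intro k hk
      simp only [Finset.mem_filter, Finset.mem_univ, true_and] at hk
      rcases eq_or_ne k j with hkj | hkj
      · subst hkj
        rw [hz₁, Function.update_self] at hk
        exact Bool.noConfusion hk
      · rw [Finset.mem_erase]
        refine ⟨hkj, ?_⟩
        simp only [Finset.mem_filter, Finset.mem_univ, true_and]
        rw [hz₁, Function.update_of_ne hkj] at hk
        exact hk
    have h1 := Finset.card_le_card hsub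
    have h2 : ((Finset.univ.filter (fun k => z₀ k = true)).erase j).card <
        (Finset.univ.filter (fun k => z₀ k = true)).card := by
      apply Finset.card_erase_lt_of_mem
      simp [hj]
    omega
  have hup : Function.update z₁ j true = z₀ := by
    funext k
    rcases eq_or_ne k j with hkj | hkj
    · subst hkj; rw [Function.update_self, hj]
    · rw [Function.update_of_ne hkj, hz₁, Function.update_of_ne hkj]
  have hposg : posIArc g j v :=
    ⟨z₁, Function.update_self _ _ _, hz₁v, by rw [hup]; exact hz₀P⟩
  have := twist_pos hposg
  exact ⟨j, this⟩

/-- The backward walk along an in-arc selector. -/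
def iterWalk (seq : ℕ → V) (x : V → Bool) : ℕ → ℕ → List (V × Bool)
  | _, 0 => []
  | s₀, (d+1) => (seq (s₀+d), x (seq (s₀+d+1)) == x (seq (s₀+d))) :: iterWalk seq x s₀ d

lemma iterWalk_spec {G : SignedDigraph V} {seq : ℕ → V} {x : V → Bool}
    (harc : ∀ n, if x (seq (n+1)) == x (seq n) then G.pos (seq (n+1)) (seq n)
      else G.neg (seq (n+1)) (seq n)) :
    ∀ (d s₀ : ℕ), G.IsWalk (seq (s₀+d)) (iterWalk seq x s₀ d) ∧
      walkEnd (seq (s₀+d)) (iterWalk seq x s₀ d) = seq s₀ ∧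
      GoodFrom (fun a b s => s = (x a == x b)) (seq (s₀+d)) (iterWalk seq x s₀ d) := by
  intro d
  induction d with
  | zero => exact fun s₀ => ⟨trivial, rfl, trivial⟩
  | succ d ih =>
    intro s₀
    obtain ⟨hw, he, hgo⟩ := ih s₀
    refine ⟨⟨harc (s₀+d), hw⟩, ?_, ⟨rfl, hgo⟩⟩
    rw [show iterWalk seq x s₀ (d+1) =
      (seq (s₀+d), x (seq (s₀+d+1)) == x (seq (s₀+d))) :: iterWalk seq x s₀ d from rfl]
    rw [walkEnd_cons]
    exact he

/-- In the all-negative case, a source-free nonempty `T` is impossible. -/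
lemma no_source_neg {f : (V → Bool) → V → Bool} {x : V → Bool} (hx : ∀ i, f x i = x i)
    {T : Finset V}
    (hdep : ∀ z z', (∀ t ∈ T, z t = z' t) → ∀ i, f z i = f z' i)
    (hNP : (IG f).NoPositiveCycle) (hTne : T.Nonempty)
    (hin : ∀ v ∈ T, ∃ z z', f z v ≠ f z' v) : False := by
  classical
  have harc : ∀ v, v ∈ T → ∃ j, (if x j == x v then posIArc f j v else negIArc f j v) := by
    intro v hv
    exact arc_signed_of_fix hx (hin v hv)
  set g : V → V := fun v => if h : v ∈ T then (harc v h).choose else v with hgdef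
  have hgspec : ∀ v (h : v ∈ T),
      (if x (g v) == x v then posIArc f (g v) v else negIArc f (g v) v) := by
    intro v h
    have : g v = (harc v h).choose := by rw [hgdef]; simp only; rw [dif_pos h]
    rw [this]
    exact (harc v h).choose_spec
  have hgT : ∀ v, v ∈ T → g v ∈ T := by
    intro v h
    have := hgspec v h
    by_cases hc : (x (g v) == x v) = true
    · rw [if_pos hc] at this
      exact arc_mem hdep (Or.inl this)
    · rw [if_neg hc] at this
      exact arc_mem hdep (Or.inr this)
  set seq : ℕ → V := fun n => g^[n] hTne.choose with hseqdef
  have hseqT : ∀ n, seq n ∈ T := by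
    intro n
    induction n with
    | zero => exact hTne.choose_spec
    | succ n ihn =>
      have : seq (n+1) = g (seq n) := by
        rw [hseqdef]
        simp only
        rw [Function.iterate_succ_apply']
      rw [this]
      exact hgT _ ihn
  have hseqsucc : ∀ n, seq (n+1) = g (seq n) := by
    intro n
    rw [hseqdef]
    simp only
    rw [Function.iterate_succ_apply']
  have harcseq : ∀ n, if x (seq (n+1)) == x (seq n) then (IG f).pos (seq (n+1)) (seq n)
      else (IG f).neg (seq (n+1)) (seq n) := by
    intro n
    rw [hseqsucc n]
    exact hgspec (seq n) (hseqT n)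
  -- pigeonhole
  obtain ⟨a, ha, b, hb, hab, heq⟩ :=
    Finset.exists_ne_map_eq_of_card_lt_of_maps_to
      (s := Finset.range (T.card + 1)) (t := T)
      (by rw [Finset.card_range]; omega) (fun n _ => hseqT n)
  wlog hlt : a < b generalizing a b
  · exact this b hb a ha (Ne.symm hab) heq.symm (by omega)
  obtain ⟨d', hd'⟩ : ∃ d', b - a = d' + 1 := ⟨b - a - 1, by omega⟩
  obtain ⟨hw, he, hgo⟩ := iterWalk_spec (G := IG f) harcseq (b - a) a
  have hba : a + (b - a) = b := by omega
  rw [hba] at hw he hgo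
  have hclosed : walkEnd (seq b) (iterWalk seq x a (b - a)) = seq b := by
    rw [he, heq]
  have hne : iterWalk seq x a (b - a) ≠ [] := by
    rw [hd']
    exact List.cons_ne_nil _ _
  obtain ⟨u', steps', hcyc, hgo'⟩ := closedWalk_cycle (G := IG f)
    (fun a b s => s = (x a == x b)) (iterWalk seq x a (b - a)).length
    (iterWalk seq x a (b - a)) (seq b) le_rfl hne hw hclosed hgo
  have hsign := goodFrom_sign x steps' u' hgo'
  rw [hcyc.2.2.1] at hsign
  have : walkSign steps' = true := by rw [hsign]; cases x u' <;> rfl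
  rw [hNP u' steps' hcyc] at this
  exact Bool.noConfusion this

end NegCase
section KeyLemmas

set_option linter.unusedSectionVars false

variable {V : Type} [Fintype V] [DecidableEq V]

lemma wordUpdate_cons (f : (V → Bool) → V → Bool) (a : V) (w : List V) (z : V → Bool) :
    wordUpdate f (a :: w) z = wordUpdate f w (localUpdate f a z) := rfl

lemma wordUpdate_append (f : (V → Bool) → V → Bool) (w₁ w₂ : List V) (z : V → Bool) :
    wordUpdate f (w₁ ++ w₂) z = wordUpdate f w₂ (wordUpdate f w₁ z) :=
  List.foldl_append

lemma wordUpdate_fix {f : (V → Bool) → V → Bool} {x : V → Bool} (hx : ∀ i, f x i = x i) :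
    ∀ w i, wordUpdate f w x i = x i := by
  intro w
  induction w with
  | nil => intro i; rfl
  | cons j w ihw =>
    intro i
    rw [wordUpdate_cons]
    have : localUpdate f j x = x := by
      funext k
      unfold localUpdate
      rcases eq_or_ne k j with h | h
      · subst h; rw [Function.update_self]; exact hx k
      · rw [Function.update_of_ne h]
    rw [this]
    exact ihw i

lemma pres {f : (V → Bool) → V → Bool} {x : V → Bool} {T : Finset V}
    (hfrz : ∀ i, i ∉ T → ∀ z, f z i = x i) :
    ∀ (w : List V) (z : V → Bool), (∀ i, i ∉ T → z i = x i) →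
      ∀ i, i ∉ T → wordUpdate f w z i = x i := by
  intro w
  induction w with
  | nil => intro z hz i hi; exact hz i hi
  | cons j w ihw =>
    intro z hz i hi
    rw [wordUpdate_cons]
    apply ihw
    · intro k hk
      unfold localUpdate
      rcases eq_or_ne k j with h | h
      · subst h; rw [Function.update_self]; exact hfrz k hk z
      · rw [Function.update_of_ne h]; exact hz k hk
    · exact hi

lemma transfer {f f' : (V → Bool) → V → Bool} {x : V → Bool} {v : V}
    (hfv : ∀ z, f z v = x v) (heq : ∀ z i, z v = x v → f' z i = f z i) :
    ∀ (w : List V) (z : V → Bool), z v = x v →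
      ∀ i, wordUpdate f w z i = wordUpdate f' w z i := by
  intro w
  induction w with
  | nil => intro z _ i; rfl
  | cons j w ihw =>
    intro z hzv i
    rw [wordUpdate_cons, wordUpdate_cons]
    have hloc : localUpdate f' j z = localUpdate f j z := by
      unfold localUpdate
      rw [heq z j hzv]
    rw [hloc]
    apply ihw
    unfold localUpdate
    rcases eq_or_ne v j with h | h
    · subst h; rw [Function.update_self]; exact hfv z
    · rw [Function.update_of_ne h]; exact hzv

lemma frz_noPos {f : (V → Bool) → V → Bool} {S : Finset V} {σ : V → Bool}
    (h : (IG f).NoPositiveCycle) : (IG (frz f S σ)).NoPositiveCycle :=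
  noPositiveCycle_mono (fun j i hp => (frz_pos hp).2) (fun j i hn => (frz_neg hn).2) h

lemma frz_dep {f : (V → Bool) → V → Bool} {T : Finset V}
    (hdep : ∀ z z', (∀ t ∈ T, z t = z' t) → ∀ i, f z i = f z' i) (S : Finset V) (σ : V → Bool) :
    ∀ z z', (∀ t ∈ T \ S, z t = z' t) → ∀ i, frz f S σ z i = frz f S σ z' i := by
  intro z z' hag i
  apply hdep
  intro t ht
  by_cases hts : t ∈ S
  · rw [if_pos hts, if_pos hts]
  · rw [if_neg hts, if_neg hts]
    exact hag t (Finset.mem_sdiff.2 ⟨ht, hts⟩)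

lemma arc_nonconst {f : (V → Bool) → V → Bool} {j v : V} (h : ArcF f j v) :
    ∃ z z', f z v ≠ f z' v := by
  rcases h with ⟨z, _, h0, h1⟩ | ⟨z, _, h0, h1⟩
  · exact ⟨z, Function.update z j true, by rw [h0, h1]; exact Bool.noConfusion⟩
  · exact ⟨z, Function.update z j true, by rw [h0, h1]; exact fun hh => Bool.noConfusion hh⟩

/-- The main induction. -/
lemma key (x : V → Bool) : ∀ (T : Finset V) (f : (V → Bool) → V → Bool),
    (∀ z z', (∀ t ∈ T, z t = z' t) → ∀ i, f z i = f z' i) →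
    (∀ i, i ∉ T → ∀ z, f z i = x i) →
    (∀ i, f x i = x i) →
    (∀ y, (∀ i, f y i = y i) → y = x) →
    ((IG f).NoNegativeCycle ∨ (IG f).NoPositiveCycle) →
    ∃ π : List V, π.Nodup ∧ (∀ v, v ∈ π ↔ v ∈ T) ∧
      ∀ w : List V, π.Sublist w → ∀ z, (∀ i, i ∉ T → z i = x i) →
        ∀ i, wordUpdate f w z i = x i := by
  classical
  intro T
  induction T using Finset.strongInduction with
  | _ T ih =>
    intro f hdep hfrz hx huniq hsign
    rcases T.eq_empty_or_nonempty with hT | hTne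
    · subst hT
      refine ⟨[], List.nodup_nil, by simp, ?_⟩
      intro w _ z hz i
      have hzx : z = x := funext (fun k => hz k (Finset.notMem_empty k))
      subst hzx
      exact wordUpdate_fix hx w i
    by_cases hsrc : ∃ v ∈ T, ∀ j, ¬ ArcF f j v
    · -- peel off a source
      obtain ⟨v, hvT, hnoarc⟩ := hsrc
      have hconstv : ∀ z, f z v = x v := by
        intro z
        have h1 : f z v = f x v :=
          eq_of_agree_on (S := (∅ : Set V)) (fun j hj => absurd hj (hnoarc j))
            (fun t ht => absurd ht (Set.notMem_empty t))
        rw [h1, hx v]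
      set f' := frz f {v} x with hf'
      have hov : ∀ z : V → Bool, z v = x v →
          (fun k => if k ∈ ({v} : Finset V) then x k else z k) = z := by
        intro z hzv
        funext k
        by_cases hk : k ∈ ({v} : Finset V)
        · rw [if_pos hk]
          have : k = v := Finset.mem_singleton.1 hk
          subst this
          exact hzv.symm
        · rw [if_neg hk]
      have heq : ∀ z i, z v = x v → f' z i = f z i := by
        intro z i hzv
        show f _ i = f z i
        rw [hov z hzv]
      have hdep' : ∀ z z', (∀ t ∈ T.erase v, z t = z' t) → ∀ i, f' z i = f' z' i := by
        intro z z' hag i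
        apply hdep
        intro t ht
        by_cases hv : t = v
        · subst hv; simp
        · simp only [Finset.mem_singleton, hv, if_false]
          exact hag t (Finset.mem_erase.2 ⟨hv, ht⟩)
      have hfrz' : ∀ i, i ∉ T.erase v → ∀ z, f' z i = x i := by
        intro i hi z
        by_cases hiv : i = v
        · subst hiv
          show f _ i = x i
          exact hconstv _
        · have hiT : i ∉ T := fun h => hi (Finset.mem_erase.2 ⟨hiv, h⟩)
          show f _ i = x i
          exact hfrz i hiT _
      have hx' : ∀ i, f' x i = x i := by
        intro i
        rw [heq x i rfl]
        exact hx i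
      have huniq' : ∀ y, (∀ i, f' y i = y i) → y = x := by
        intro y hy
        have hyv : y v = x v := by
          rw [← hy v]
          show f _ v = x v
          exact hconstv _
        apply huniq
        intro i
        rw [← heq y i hyv]
        exact hy i
      have hsign' : (IG f').NoNegativeCycle ∨ (IG f').NoPositiveCycle := by
        rcases hsign with h | h
        · exact Or.inl (frz_noNeg h)
        · exact Or.inr (frz_noPos h)
      obtain ⟨π', hnd', hcov', hsync'⟩ := ih (T.erase v) (Finset.erase_ssubset hvT) f'
        hdep' hfrz' hx' huniq' hsign'
      refine ⟨v :: π', ?_, ?_, ?_⟩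
      · refine List.nodup_cons.2 ⟨?_, hnd'⟩
        intro hmem
        have := (hcov' v).1 hmem
        exact absurd this (by simp)
      · intro u
        rw [List.mem_cons, hcov' u, Finset.mem_erase]
        constructor
        · rintro (rfl | ⟨_, hu⟩)
          · exact hvT
          · exact hu
        · intro hu
          by_cases huv : u = v
          · exact Or.inl huv
          · exact Or.inr ⟨huv, hu⟩
      · intro w hsub z hz i
        obtain ⟨r₁, r₂, hw, hvr, hsub₂⟩ := List.cons_sublist_iff.1 hsub
        obtain ⟨s, t, hst⟩ := List.append_of_mem hvr
        have hw2 : w = s ++ v :: (t ++ r₂) := by rw [hw, hst]; simp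
        have hsub3 : π'.Sublist (t ++ r₂) := hsub₂.trans (List.sublist_append_right t r₂)
        rw [hw2, wordUpdate_append, wordUpdate_cons]
        set z₁ := wordUpdate f s z with hz₁def
        have hz₁ : ∀ k, k ∉ T → z₁ k = x k := fun k hk => pres hfrz s z hz k hk
        set z₂ := localUpdate f v z₁ with hz₂def
        have hz₂v : z₂ v = x v := by
          show Function.update z₁ v (f z₁ v) v = x v
          rw [Function.update_self]
          exact hconstv z₁
        have hz₂ : ∀ k, k ∉ T.erase v → z₂ k = x k := by
          intro k hk
          by_cases hkv : k = v
          · subst hkv; exact hz₂v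
          · have hkT : k ∉ T := fun h => hk (Finset.mem_erase.2 ⟨hkv, h⟩)
            show Function.update z₁ v (f z₁ v) k = x k
            rw [Function.update_of_ne hkv]
            exact hz₁ k hkT
        have hres := hsync' (t ++ r₂) hsub3 z₂ hz₂ i
        rw [← hres]
        exact transfer hconstv heq (t ++ r₂) z₂ hz₂v i
    · -- no source: contradiction
      exfalso
      push_neg at hsrc
      have hin : ∀ v ∈ T, ∃ j, ArcF f j v := by
        intro v hv
        obtain ⟨j, hj⟩ := hsrc v hv
        exact ⟨j, hj⟩
      have hncv : ∀ v ∈ T, ∃ z z', f z v ≠ f z' v := by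
        intro v hv
        obtain ⟨j, hj⟩ := hin v hv
        exact arc_nonconst hj
      rcases hsign with hNN | hNP
      · obtain ⟨S, σ, hSne, hST, hl1, hl2⟩ := complock hdep hNN hin hTne
        obtain ⟨y₁, hy₁⟩ := exist_fix (T \ S) (frz f S σ) (frz_dep hdep S σ) (frz_noNeg hNN)
        obtain ⟨y₂, hy₂⟩ := exist_fix (T \ S) (frz f S (fun k => !(σ k)))
          (frz_dep hdep S (fun k => !(σ k))) (frz_noNeg hNN)
        have hf₁ := frz_fix (fun z hz i hi => hl1 z hz i hi) hy₁
        have hf₂ := frz_fix (σ := fun k => !(σ k)) (fun z hz i hi => hl2 z hz i hi) hy₂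
        have he₁ : (fun k => if k ∈ S then σ k else y₁ k) = x := huniq _ hf₁
        have he₂ : (fun k => if k ∈ S then !(σ k) else y₂ k) = x := huniq _ hf₂
        obtain ⟨s₀, hs₀⟩ := hSne
        have h1 : x s₀ = σ s₀ := by rw [← he₁]; simp [hs₀]
        have h2 : x s₀ = !(σ s₀) := by rw [← he₂]; simp [hs₀]
        rw [h1] at h2
        exact absurd h2 (by cases σ s₀ <;> simp)
      · exact no_source_neg hx hdep hNP hTne hncv

end KeyLemmas
/-- Proposition 6 of the paper. Let `G` be a signed digraph in which
all cycles have the same sign, and let `f` be a Boolean network on `G` with exactly one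
fixed point. Then there is a word `π` in which every vertex occurs exactly once such
that every word containing `π` as a subsequence synchronizes `f`; in particular `π`
itself synchronizes `f`. -/
theorem statement9 {V : Type} [Fintype V] [DecidableEq V]
    (G : SignedDigraph V)
    (hsign : G.NoNegativeCycle ∨ G.NoPositiveCycle)
    (f : (V → Bool) → V → Bool) (hf : IsBNOn f G)
    (hfix : ∃! x : V → Bool, f x = x) :
    ∃ π : List V, π.Nodup ∧ (∀ v : V, v ∈ π) ∧
      (∀ w : List V, π.Sublist w → SyncWord f w) ∧ SyncWord f π := by
  classical
  obtain ⟨x, hxfix, hxuniq⟩ := hfix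
  have hsign' : (IG f).NoNegativeCycle ∨ (IG f).NoPositiveCycle := by
    rcases hsign with h | h
    · exact Or.inl (noNegativeCycle_mono (fun j i hp => (hf.1 j i).2 hp)
        (fun j i hn => (hf.2 j i).2 hn) h)
    · exact Or.inr (noPositiveCycle_mono (fun j i hp => (hf.1 j i).2 hp)
        (fun j i hn => (hf.2 j i).2 hn) h)
  obtain ⟨π, hnd, hcov, hsync⟩ := key x Finset.univ f
    (fun z z' hag i => by rw [show z = z' from funext (fun t => hag t (Finset.mem_univ t))])
    (fun i hi => absurd (Finset.mem_univ i) hi)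
    (fun i => by rw [hxfix])
    (fun y hy => hxuniq y (funext hy))
    hsign'
  refine ⟨π, hnd, fun v => (hcov v).2 (Finset.mem_univ v), ?_, ?_⟩
  · intro w hw
    exact ⟨x, fun z => funext (fun i =>
      hsync w hw z (fun k hk => absurd (Finset.mem_univ k) hk) i)⟩
  · exact ⟨x, fun z => funext (fun i =>
      hsync π (List.Sublist.refl π) z (fun k hk => absurd (Finset.mem_univ k) hk) i)⟩
end

section
/- Let G be a signed digraph with vertex set V and let f be a Boolean network on G. Let I ⊆ V be such that the induced subgraph G∖I (on V∖I) is acyclic, and let w be a topological sort of G∖I, i.e., a word listing each vertex of V∖I exactly once such that for every arc of G∖I from j to i, the letter j occurs before the letter i in w. Then for every pair of configurations x, y on V with x_I = y_I (x and y agree on I), we have f^w(x) = f^w(y). -/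
section Aux

variable {V : Type} [DecidableEq V]

lemma arc_of_ne (G : SignedDigraph V) (f : (V → Bool) → V → Bool) (hf : IsBNOn f G)
    (i j : V) (x : V → Bool) (b : Bool)
    (h : f x i ≠ f (Function.update x j b) i) : G.Arc j i := by
  have hb : x j ≠ b := by
    intro e
    apply h
    rw [← e, Function.update_eq_self]
  cases hxj : x j with
  | false =>
    have hbt : b = true := by
      cases b
      · exact absurd hxj hb
      · rfl
    subst hbt
    cases hfx : f x i with
    | false =>
      left
      rw [(hf.1 j i)]
      refine ⟨x, hxj, hfx, ?_⟩
      rw [hfx] at h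
      cases hft : f (Function.update x j true) i
      · exact absurd hft.symm h
      · rfl
    | true =>
      right
      rw [(hf.2 j i)]
      refine ⟨x, hxj, hfx, ?_⟩
      rw [hfx] at h
      cases hft : f (Function.update x j true) i
      · rfl
      · exact absurd hft.symm h
  | true =>
    have hbf : b = false := by
      cases b
      · rfl
      · exact absurd hxj hb
    subst hbf
    set y := Function.update x j false with hy
    have hyj : y j = false := by simp [hy]
    have hxy : Function.update y j true = x := by
      rw [hy, Function.update_idem, ← hxj, Function.update_eq_self]
    cases hfy : f y i with
    | false =>
      left
      rw [(hf.1 j i)]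
      refine ⟨y, hyj, hfy, ?_⟩
      rw [hxy]
      rw [hfy] at h
      cases hft : f x i
      · exact absurd hft h
      · rfl
    | true =>
      right
      rw [(hf.2 j i)]
      refine ⟨y, hyj, hfy, ?_⟩
      rw [hxy]
      rw [hfy] at h
      cases hft : f x i
      · rfl
      · exact absurd hft h

lemma insens (G : SignedDigraph V) (f : (V → Bool) → V → Bool) (hf : IsBNOn f G)
    (i : V) : ∀ (s : Finset V) (x y : V → Bool), (∀ j, x j ≠ y j → j ∈ s) →
    (∀ j, G.Arc j i → x j = y j) → f x i = f y i := by
  intro s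
  induction s using Finset.induction with
  | empty =>
    intro x y hsub _
    have : x = y := funext fun j => by
      by_contra hne
      exact absurd (hsub j hne) (Finset.notMem_empty j)
    rw [this]
  | @insert a t ha ih =>
    intro x y hsub harc
    by_cases hxa : x a = y a
    · exact ih x y (fun j hne => by
        rcases Finset.mem_insert.mp (hsub j hne) with rfl | hj
        · exact absurd hxa hne
        · exact hj) harc
    · have hna : ¬ G.Arc a i := fun h => hxa (harc a h)
      set x' := Function.update x a (y a) with hx'
      have h1 : f x i = f x' i := by
        by_contra hne
        exact hna (arc_of_ne G f hf i a x (y a) hne)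
      rw [h1]
      apply ih x' y
      · intro j hne
        have hja : j ≠ a := by
          intro rfl'
          subst rfl'
          simp [hx'] at hne
        have : x j ≠ y j := by
          rwa [hx', Function.update_of_ne hja] at hne
        rcases Finset.mem_insert.mp (hsub j this) with rfl | hj
        · exact absurd rfl hja
        · exact hj
      · intro j hj
        by_cases hja : j = a
        · subst hja; simp [hx']
        · rw [hx', Function.update_of_ne hja]
          exact harc j hj

end Aux

/-- Lemma 15 of the paper. Let `f` be a Boolean network on a signed
digraph `G` with vertex set `V`, let `I ⊆ V` be such that `G∖I` is acyclic, and let `w`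
be a topological sort of `G∖I`. Then for configurations `x, y` agreeing on `I`,
`f^w(x) = f^w(y)`. -/
theorem statement16 {V : Type} [Fintype V] [DecidableEq V]
    (G : SignedDigraph V)
    (f : (V → Bool) → V → Bool) (hf : IsBNOn f G)
    (I : Set V)
    (hacyc : ∀ u steps, ¬ (G.induce Iᶜ).IsCycle u steps)
    (w : List V)
    (hwmem : ∀ v : V, v ∈ w ↔ v ∉ I) (hwnodup : w.Nodup)
    (htopo : ∀ j i : V, j ∉ I → i ∉ I → G.Arc j i → w.idxOf j < w.idxOf i) :
    ∀ x y : V → Bool, (∀ i ∈ I, x i = y i) →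
      wordUpdate f w x = wordUpdate f w y := by
  intro x y hxy
  have key : ∀ k, k ≤ w.length → ∀ v, (v ∈ I ∨ v ∈ w.take k) →
      wordUpdate f (w.take k) x v = wordUpdate f (w.take k) y v := by
    intro k
    induction k with
    | zero =>
      intro _ v hv
      simp only [List.take_zero, wordUpdate, List.foldl_nil]
      rcases hv with h | h
      · exact hxy v h
      · simp at h
    | succ k ih =>
      intro hk v hv
      have hk' : k < w.length := hk
      set i := w.get ⟨k, hk'⟩ with hi
      have hiI : i ∉ I := (hwmem i).mp (w.get_mem ⟨k, hk'⟩)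
      have htake : w.take (k+1) = w.take k ++ [i] := by
        rw [List.take_succ]
        simp [hi, List.getElem?_eq_getElem hk']
      have hstep : ∀ z : V → Bool, wordUpdate f (w.take (k+1)) z
          = localUpdate f i (wordUpdate f (w.take k) z) := by
        intro z
        rw [htake]
        simp [wordUpdate, List.foldl_append]
      rw [hstep, hstep]
      have hindi : w.idxOf i = k := by
        rw [hi]
        exact List.get_idxOf hwnodup _
      by_cases hvi : v = i
      · subst hvi
        simp only [localUpdate, Function.update_self]
        apply insens G f hf i Finset.univ
        · intro j _; exact Finset.mem_univ j
        · intro j hj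
          by_cases hjI : j ∈ I
          · exact ih (le_of_lt hk') j (Or.inl hjI)
          · have hlt := htopo j i hjI hiI hj
            rw [hindi] at hlt
            have hjw : j ∈ w := (hwmem j).mpr hjI
            have hjlen : w.idxOf j < w.length := List.idxOf_lt_length_iff.mpr hjw
            have hjtake : j ∈ w.take k := by
              have : (w.take k)[w.idxOf j]'(by
                  rw [List.length_take]
                  exact lt_min hlt hjlen) = j := by
                rw [List.getElem_take]
                exact List.getElem_idxOf hjlen
              rw [← this]
              exact List.getElem_mem _
            exact ih (le_of_lt hk') j (Or.inr hjtake)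
      · simp only [localUpdate, Function.update_of_ne hvi]
        apply ih (le_of_lt hk')
        rcases hv with h | h
        · exact Or.inl h
        · right
          rw [htake] at h
          rcases List.mem_append.mp h with h | h
          · exact h
          · simp at h; exact absurd h hvi
  funext v
  have := key w.length le_rfl v (by
    by_cases hvI : v ∈ I
    · exact Or.inl hvI
    · right
      rw [List.take_length]
      exact (hwmem v).mpr hvI)
  rwa [List.take_length] at this
end
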